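/- arXiv:0812.4154 — 4 statements merged into one kernel-verified Lean document; each statement's English description precedes it below -/
import Mathlib

section
/- Let P be a regular H-palindromic matrix polynomial of degree m with n×n coefficients, let λ ∈ ℂ with |λ| = 1, and let x ∈ ℂⁿ with ‖x‖₂ = 1; set r := −P(λ)x. Then the Frobenius-norm structured backward error over the class S_p of H-palindromic polynomials of degree m satisfies η_F^{S_p}(λ, x, P) = √( (2‖r‖₂² − |rᴴx|²)/(m+1) ); in particular η_F^{S_p}(λ, x, P) ≤ √2 · ‖r‖₂/√(m+1). -/
noncomputable section

/-- Euclidean (ℓ²) norm of a complex vector. -/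
def vnorm {α : Type*} [Fintype α] (x : α → ℂ) : ℝ :=
  Real.sqrt (∑ i, ‖x i‖ ^ 2)

/-- Frobenius norm of a complex matrix. -/
def frobNorm {α : Type*} [Fintype α] (A : Matrix α α ℂ) : ℝ :=
  Real.sqrt (∑ i, ∑ j, ‖A i j‖ ^ 2)

/-- Spectral (operator 2-)norm of a complex matrix. -/
def specNorm {α : Type*} [Fintype α] [DecidableEq α] (A : Matrix α α ℂ) : ℝ :=
  ‖Matrix.toEuclideanCLM (𝕜 := ℂ) A‖

/-- Evaluation of the matrix polynomial `P(z) = ∑_{j=0}^m z^j A_j`. -/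
def evalP {n : ℕ} (m : ℕ) (A : ℕ → Matrix (Fin n) (Fin n) ℂ) (z : ℂ) :
    Matrix (Fin n) (Fin n) ℂ :=
  ∑ j ∈ Finset.range (m + 1), z ^ j • A j

/-- `‖Λ_m‖₂² = ∑_{j=0}^m |λ|^{2j}` where `Λ_m = (1, λ, …, λ^m)ᵀ`. -/
def LamNormSq (m : ℕ) (lam : ℂ) : ℝ :=
  ∑ j ∈ Finset.range (m + 1), ‖lam‖ ^ (2 * j)

/-- `‖Π₊(Λ_m)‖₂²`. -/
def PiPlusSq (m : ℕ) (lam : ℂ) : ℝ :=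
  if m % 2 = 1 then
    ∑ j ∈ Finset.range ((m + 1) / 2), ‖lam ^ j + lam ^ (m - j)‖ ^ 2 / 2
  else
    (∑ j ∈ Finset.range (m / 2), ‖lam ^ j + lam ^ (m - j)‖ ^ 2 / 2) + ‖lam ^ (m / 2)‖ ^ 2

/-- `‖Π₋(Λ_m)‖₂²`. -/
def PiMinusSq (m : ℕ) (lam : ℂ) : ℝ :=
  if m % 2 = 1 then
    ∑ j ∈ Finset.range ((m + 1) / 2), ‖lam ^ j - lam ^ (m - j)‖ ^ 2 / 2
  else
    ∑ j ∈ Finset.range (m / 2), ‖lam ^ j - lam ^ (m - j)‖ ^ 2 / 2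

/-- Frobenius-norm structured backward error over H-palindromic polynomials of degree `m`. -/
def etaF_Hpal {n : ℕ} (m : ℕ) (A : ℕ → Matrix (Fin n) (Fin n) ℂ) (lam : ℂ)
    (x : Fin n → ℂ) : ℝ :=
  sInf { e : ℝ | ∃ Δ : ℕ → Matrix (Fin n) (Fin n) ℂ,
    (∀ j ≤ m, Δ (m - j) = (Δ j).conjTranspose) ∧
    (evalP m A lam).mulVec x + (evalP m Δ lam).mulVec x = 0 ∧
    e = Real.sqrt (∑ j ∈ Finset.range (m + 1), frobNorm (Δ j) ^ 2) }

local notation "conj'" => starRingEnd ℂ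

lemma norm_sq_complex (z : ℂ) : ‖z‖ ^ 2 = Complex.normSq z := by
  rw [Complex.sq_norm]

lemma sum_norm_sq_add {ι : Type*} (s : Finset ι) (f g : ι → ℂ) :
    ∑ i ∈ s, ‖f i + g i‖ ^ 2
      = (∑ i ∈ s, ‖f i‖ ^ 2) + (∑ i ∈ s, ‖g i‖ ^ 2)
        + 2 * (∑ i ∈ s, f i * conj' (g i)).re := by
  rw [Complex.re_sum, Finset.mul_sum, ← Finset.sum_add_distrib, ← Finset.sum_add_distrib]
  refine Finset.sum_congr rfl fun i _ => ?_
  simp only [norm_sq_complex]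
  rw [Complex.normSq_add]

lemma sum_norm_sq_sub {ι : Type*} (s : Finset ι) (f g : ι → ℂ) :
    ∑ i ∈ s, ‖f i - g i‖ ^ 2
      = (∑ i ∈ s, ‖f i‖ ^ 2) + (∑ i ∈ s, ‖g i‖ ^ 2)
        - 2 * (∑ i ∈ s, f i * conj' (g i)).re := by
  rw [Complex.re_sum, Finset.mul_sum, ← Finset.sum_add_distrib, ← Finset.sum_sub_distrib]
  refine Finset.sum_congr rfl fun i _ => ?_
  simp only [norm_sq_complex]
  rw [Complex.normSq_sub]

lemma sum_mul_conj_self {n : ℕ} (x : Fin n → ℂ) (hx : ∑ i, ‖x i‖ ^ 2 = 1) :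
    ∑ i, x i * conj' (x i) = 1 := by
  have h : ∑ i, Complex.normSq (x i) = 1 := by simpa [← norm_sq_complex] using hx
  simp only [Complex.mul_conj, ← Complex.ofReal_sum, h, Complex.ofReal_one]

lemma sum_proj_sub {n : ℕ} (x a : Fin n → ℂ) (hx : ∑ i, ‖x i‖ ^ 2 = 1)
    (c : ℂ) (hc : ∑ i, a i * conj' (x i) = c) :
    ∑ i, ‖a i - c * x i‖ ^ 2 = (∑ i, ‖a i‖ ^ 2) - ‖c‖ ^ 2 := by
  rw [sum_norm_sq_sub]
  have h1 : ∑ i, ‖c * x i‖ ^ 2 = ‖c‖ ^ 2 := by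
    simp only [norm_mul, mul_pow, ← Finset.mul_sum, hx, mul_one]
  have h2 : (∑ i, a i * conj' (c * x i)) = c * conj' c := by
    simp only [map_mul, mul_comm, mul_left_comm, ← Finset.mul_sum]
    rw [Finset.sum_congr rfl (fun i _ => by ring : ∀ i ∈ Finset.univ, a i * (conj' c * conj' (x i)) = conj' c * (a i * conj' (x i))), ← Finset.mul_sum, hc]
    ring
  rw [h1, h2, Complex.mul_conj, Complex.ofReal_re, ← norm_sq_complex]
  ring

lemma cs_sum {n : ℕ} (x p : Fin n → ℂ) (hx : ∑ i, ‖x i‖ ^ 2 = 1) :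
    ‖∑ i, conj' (p i) * x i‖ ^ 2 ≤ ∑ i, ‖p i‖ ^ 2 := by
  have hp0 : (0:ℝ) ≤ ∑ i, ‖p i‖ ^ 2 := by positivity
  let P : EuclideanSpace ℂ (Fin n) := WithLp.toLp 2 p
  let X : EuclideanSpace ℂ (Fin n) := WithLp.toLp 2 x
  have h := norm_inner_le_norm (𝕜 := ℂ) P X
  rw [EuclideanSpace.norm_eq, EuclideanSpace.norm_eq] at h
  have hinner : (inner ℂ P X : ℂ) = ∑ i, conj' (p i) * x i := by
    rw [PiLp.inner_apply]
    exact Finset.sum_congr rfl fun i _ => by simp [P, X, mul_comm]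
  calc ‖∑ i, conj' (p i) * x i‖ ^ 2 = ‖(inner ℂ P X : ℂ)‖ ^ 2 := by rw [hinner]
    _ ≤ (Real.sqrt (∑ i, ‖p i‖ ^ 2) * Real.sqrt (∑ i, ‖x i‖ ^ 2)) ^ 2 := by
        exact pow_le_pow_left₀ (norm_nonneg _) h 2
    _ = ∑ i, ‖p i‖ ^ 2 := by rw [hx, Real.sqrt_one, mul_one, Real.sq_sqrt hp0]

lemma matrix_lower {n : ℕ} (x : Fin n → ℂ) (hx : ∑ i, ‖x i‖ ^ 2 = 1)
    (G : Matrix (Fin n) (Fin n) ℂ) :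
    (∑ i, ‖G.mulVec x i‖ ^ 2) + (∑ k, ‖G.conjTranspose.mulVec x k‖ ^ 2)
      - ‖∑ i, conj' (x i) * G.mulVec x i‖ ^ 2 ≤ ∑ i, ∑ k, ‖G i k‖ ^ 2 := by
  set u : Fin n → ℂ := G.mulVec x with hu
  set v : Fin n → ℂ := G.conjTranspose.mulVec x with hv
  set c0 : ℂ := ∑ i, conj' (x i) * u i with hc0
  have hxc : ∑ i, ‖conj' (x i)‖ ^ 2 = 1 := by simpa [RCLike.norm_conj] using hx
  set ρ : Fin n → Fin n → ℂ := fun i k => G i k - u i * conj' (x k) with hρ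
  have hui : ∀ i, u i = ∑ k, G i k * x k := fun i => by
    simp [hu, Matrix.mulVec, dotProduct]
  have hvk : ∀ k, v k = ∑ i, conj' (G i k) * x i := fun k => by
    simp [hv, Matrix.mulVec, dotProduct, Matrix.conjTranspose_apply]
  have hrow : ∀ i, ∑ k, ‖ρ i k‖ ^ 2 = (∑ k, ‖G i k‖ ^ 2) - ‖u i‖ ^ 2 := by
    intro i
    have hci : ∑ k, G i k * conj' (conj' (x k)) = u i := by
      simp [hui i]
    simpa [hρ] using sum_proj_sub (fun k => conj' (x k)) (fun k => G i k) hxc (u i) hci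
  have h1 : ∑ i, conj' (u i) * x i = conj' c0 := by
    rw [hc0, map_sum]
    exact Finset.sum_congr rfl fun i _ => by
      rw [map_mul, RingHomCompTriple.comp_apply, RingHom.id_apply]; ring
  have hcol_id : ∀ k, ∑ i, conj' (ρ i k) * x i = v k - conj' c0 * x k := by
    intro k
    calc ∑ i, conj' (ρ i k) * x i
        = (∑ i, conj' (G i k) * x i) - (∑ i, conj' (u i) * x i) * x k := by
          rw [Finset.sum_mul, ← Finset.sum_sub_distrib]
          refine Finset.sum_congr rfl fun i _ => ?_
          simp only [hρ, map_sub, map_mul, RingHomCompTriple.comp_apply, RingHom.id_apply]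
          ring
      _ = v k - conj' c0 * x k := by rw [h1, ← hvk k]
  have hcs : ∀ k, ‖v k - conj' c0 * x k‖ ^ 2 ≤ ∑ i, ‖ρ i k‖ ^ 2 := fun k => by
    have := cs_sum x (fun i => ρ i k) hx
    rwa [hcol_id k] at this
  have hvsum : ∑ k, v k * conj' (x k) = conj' c0 := by
    have hstep : ∑ k, conj' (v k) * x k = c0 := by
      calc ∑ k, conj' (v k) * x k = ∑ k, ∑ i, (G i k * conj' (x i)) * x k := by
            refine Finset.sum_congr rfl fun k _ => ?_
            rw [hvk k, map_sum, Finset.sum_mul]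
            exact Finset.sum_congr rfl fun i _ => by
              rw [map_mul, RingHomCompTriple.comp_apply, RingHom.id_apply]
        _ = ∑ i, conj' (x i) * u i := by
            rw [Finset.sum_comm]
            exact Finset.sum_congr rfl fun i _ => by
              rw [hui i, Finset.mul_sum]
              exact Finset.sum_congr rfl fun k _ => by ring
        _ = c0 := hc0.symm
    calc ∑ k, v k * conj' (x k) = conj' (∑ k, conj' (v k) * x k) := by
          rw [map_sum]
          exact Finset.sum_congr rfl fun k _ => by
            rw [map_mul, RingHomCompTriple.comp_apply, RingHom.id_apply]
      _ = conj' c0 := by rw [hstep]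
  have hproj : ∑ k, ‖v k - conj' c0 * x k‖ ^ 2 = (∑ k, ‖v k‖ ^ 2) - ‖c0‖ ^ 2 := by
    have := sum_proj_sub x v hx (conj' c0) hvsum
    rwa [RCLike.norm_conj] at this
  have hA : ∑ i, ∑ k, ‖G i k‖ ^ 2 = (∑ i, ‖u i‖ ^ 2) + ∑ i, ∑ k, ‖ρ i k‖ ^ 2 := by
    rw [← Finset.sum_add_distrib]
    exact Finset.sum_congr rfl fun i _ => by rw [hrow i]; ring
  have hB : ∑ k, ‖v k - conj' c0 * x k‖ ^ 2 ≤ ∑ k, ∑ i, ‖ρ i k‖ ^ 2 :=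
    Finset.sum_le_sum fun k _ => hcs k
  have hswap : ∑ i, ∑ k, ‖ρ i k‖ ^ 2 = ∑ k, ∑ i, ‖ρ i k‖ ^ 2 := Finset.sum_comm
  rw [hproj] at hB
  linarith [hA, hB, hswap]

lemma evalP_apply {n : ℕ} (m : ℕ) (A : ℕ → Matrix (Fin n) (Fin n) ℂ) (z : ℂ) (i k : Fin n) :
    evalP m A z i k = ∑ j ∈ Finset.range (m + 1), z ^ j * A j i k := by
  simp [evalP, Matrix.sum_apply]

lemma evalP_mulVec {n : ℕ} (m : ℕ) (A : ℕ → Matrix (Fin n) (Fin n) ℂ) (z : ℂ)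
    (x : Fin n → ℂ) (i : Fin n) :
    (evalP m A z).mulVec x i
      = ∑ j ∈ Finset.range (m + 1), z ^ j * ∑ k, A j i k * x k := by
  simp only [Matrix.mulVec, dotProduct, evalP_apply, Finset.sum_mul]
  rw [Finset.sum_comm]
  exact Finset.sum_congr rfl fun j _ => by
    rw [Finset.mul_sum]
    exact Finset.sum_congr rfl fun k _ => by ring

set_option maxHeartbeats 2000000 in
/-- Frobenius structured backward error, H-palindromic, |λ| = 1. -/
theorem stmt_11 {m n : ℕ} (hm : 0 < m) (hn : 0 < n)
    (A : ℕ → Matrix (Fin n) (Fin n) ℂ)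
    (hpal : ∀ j ≤ m, A (m - j) = (A j).conjTranspose)
    (hreg : ∃ z : ℂ, (evalP m A z).det ≠ 0)
    (lam : ℂ) (hlam : ‖lam‖ = 1)
    (x : Fin n → ℂ) (hx : vnorm x = 1)
    (r : Fin n → ℂ) (hr : r = -(evalP m A lam).mulVec x) :
    etaF_Hpal m A lam x =
        Real.sqrt ((2 * vnorm r ^ 2 - ‖dotProduct (star r) x‖ ^ 2) / ((m : ℝ) + 1)) ∧
      etaF_Hpal m A lam x ≤ Real.sqrt 2 * vnorm r / Real.sqrt ((m : ℝ) + 1) := by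
  classical
  -- basic facts about lam
  have hlam0 : lam * conj' lam = 1 := by
    rw [Complex.mul_conj]
    have : Complex.normSq lam = 1 := by rw [← norm_sq_complex, hlam]; norm_num
    rw [this, Complex.ofReal_one]
  have hpow : ∀ j : ℕ, lam ^ j * conj' lam ^ j = 1 := fun j => by
    rw [← mul_pow, hlam0, one_pow]
  -- unit vector in sum form
  have hxR : ∑ i, ‖x i‖ ^ 2 = 1 := by
    have h0 : (0:ℝ) ≤ ∑ i, ‖x i‖ ^ 2 := Finset.sum_nonneg fun i _ => sq_nonneg _
    have h1 : Real.sqrt (∑ i, ‖x i‖ ^ 2) = 1 := hx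
    nlinarith [Real.sq_sqrt h0, h1]
  have hxc1 : ∑ i, x i * conj' (x i) = 1 := sum_mul_conj_self x hxR
  have hR0 : (0:ℝ) ≤ ∑ i, ‖r i‖ ^ 2 := Finset.sum_nonneg fun i _ => sq_nonneg _
  set c : ℂ := ∑ i, r i * conj' (x i) with hcdef
  -- the scalar palindromic identity  lam^m * conj c = c
  have hc : lam ^ m * conj' c = c := by
    set s : ℕ → ℂ := fun j => ∑ i, ∑ k, A j i k * x k * conj' (x i) with hs
    have hsc : ∀ j ≤ m, conj' (s j) = s (m - j) := by
      intro j hj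
      have hAe : ∀ i k : Fin n, A (m - j) i k = conj' (A j k i) := by
        intro i k
        rw [hpal j hj, Matrix.conjTranspose_apply]
        rfl
      rw [hs]
      simp only
      rw [map_sum]
      calc ∑ i, conj' (∑ k, A j i k * x k * conj' (x i))
          = ∑ i, ∑ k, conj' (A j i k) * conj' (x k) * x i := by
            refine Finset.sum_congr rfl fun i _ => ?_
            rw [map_sum]
            refine Finset.sum_congr rfl fun k _ => ?_
            rw [map_mul, map_mul, RingHomCompTriple.comp_apply, RingHom.id_apply]
        _ = ∑ k, ∑ i, conj' (A j i k) * conj' (x k) * x i := Finset.sum_comm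
        _ = ∑ i, ∑ k, A (m - j) i k * x k * conj' (x i) := by
            refine Finset.sum_congr rfl fun k _ => ?_
            refine Finset.sum_congr rfl fun i _ => ?_
            rw [hAe k i]
            ring
    have hq : c = -∑ j ∈ Finset.range (m + 1), lam ^ j * s j := by
      rw [hcdef, hr]
      have hterm1 : ∀ i : Fin n, (-(evalP m A lam).mulVec x) i * conj' (x i)
          = ∑ j ∈ Finset.range (m + 1), -((lam ^ j * ∑ k, A j i k * x k) * conj' (x i)) := by
        intro i
        rw [Pi.neg_apply, evalP_mulVec, neg_mul, Finset.sum_mul, ← Finset.sum_neg_distrib]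
      rw [Finset.sum_congr rfl fun i _ => hterm1 i, Finset.sum_comm]
      have hterm2 : ∀ j ∈ Finset.range (m + 1),
          ∑ i, -((lam ^ j * ∑ k, A j i k * x k) * conj' (x i)) = -(lam ^ j * s j) := by
        intro j _
        rw [Finset.sum_neg_distrib, neg_inj, hs]
        simp only
        rw [Finset.mul_sum]
        refine Finset.sum_congr rfl fun i _ => ?_
        rw [Finset.mul_sum, Finset.sum_mul, Finset.mul_sum]
        refine Finset.sum_congr rfl fun k _ => ?_
        ring
      rw [Finset.sum_congr rfl hterm2, Finset.sum_neg_distrib]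
    have hpw : ∀ j ≤ m, lam ^ m * conj' lam ^ j = lam ^ (m - j) := by
      intro j hj
      have h1 : lam ^ m = lam ^ (m - j) * lam ^ j := by
        rw [← pow_add, Nat.sub_add_cancel hj]
      rw [h1, mul_assoc, hpow j, mul_one]
    rw [hq, map_neg, map_sum, mul_neg, Finset.mul_sum, neg_inj]
    have hterm : ∀ j ∈ Finset.range (m + 1),
        lam ^ m * conj' (lam ^ j * s j) = lam ^ (m - j) * s (m - j) := by
      intro j hj
      rw [map_mul, map_pow, ← mul_assoc, hpw j (Finset.mem_range_succ_iff.mp hj),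
        hsc j (Finset.mem_range_succ_iff.mp hj)]
    rw [Finset.sum_congr rfl hterm]
    have hrefl := Finset.sum_range_reflect (fun j => lam ^ j * s j) (m + 1)
    simp only [Nat.add_sub_cancel] at hrefl
    exact hrefl
  -- key power identity
  have hkey : ∀ j ≤ m, conj' lam ^ (m - j) * c = lam ^ j * conj' c := by
    intro j hj
    have h1 : lam ^ m = lam ^ (m - j) * lam ^ j := by
      rw [← pow_add, Nat.sub_add_cancel hj]
    calc conj' lam ^ (m - j) * c = conj' lam ^ (m - j) * (lam ^ m * conj' c) := by rw [hc]
      _ = (lam ^ (m - j) * conj' lam ^ (m - j)) * (lam ^ j * conj' c) := by rw [h1]; ring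
      _ = lam ^ j * conj' c := by rw [hpow (m - j), one_mul]
  -- more facts
  have hrcx : ∑ i, conj' (r i) * x i = conj' c := by
    rw [hcdef, map_sum]
    exact Finset.sum_congr rfl fun i _ => by
      rw [map_mul, RingHomCompTriple.comp_apply, RingHom.id_apply]
  have hCrR : ‖c‖ ^ 2 ≤ ∑ i, ‖r i‖ ^ 2 := by
    have h := cs_sum x r hxR
    rwa [hrcx, RCLike.norm_conj] at h
  set rp : Fin n → ℂ := fun i => r i - c * x i with hrpdef
  have hrpe : ∀ t, rp t = r t - c * x t := fun t => by rw [hrpdef]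
  have hrpce : ∀ t, conj' (rp t) = conj' (r t) - conj' c * conj' (x t) := fun t => by
    rw [hrpe t, map_sub, map_mul]
  have hrpx : ∑ k, rp k * conj' (x k) = 0 := by
    calc ∑ k, rp k * conj' (x k)
        = (∑ k, r k * conj' (x k)) - c * ∑ k, x k * conj' (x k) := by
          rw [Finset.mul_sum, ← Finset.sum_sub_distrib]
          exact Finset.sum_congr rfl fun k _ => by rw [hrpe k]; ring
      _ = 0 := by rw [← hcdef, hxc1, mul_one, sub_self]
  have hxrp : ∑ k, conj' (rp k) * x k = 0 := by
    have h := congrArg conj' hrpx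
    rw [map_zero, map_sum] at h
    calc ∑ k, conj' (rp k) * x k = ∑ k, conj' (rp k * conj' (x k)) := by
          exact Finset.sum_congr rfl fun k _ => by
            rw [map_mul, RingHomCompTriple.comp_apply, RingHom.id_apply]
      _ = 0 := h
  have hrpR : ∑ k, ‖rp k‖ ^ 2 = (∑ i, ‖r i‖ ^ 2) - ‖c‖ ^ 2 := by
    have h := sum_proj_sub x r hxR c hcdef.symm
    calc ∑ k, ‖rp k‖ ^ 2 = ∑ k, ‖r k - c * x k‖ ^ 2 :=
          Finset.sum_congr rfl fun k _ => by rw [hrpe k]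
      _ = _ := h
  -- the optimal perturbation
  have hM1 : ((m : ℂ) + 1) ≠ 0 := by
    have : ((m : ℂ) + 1) = ((m + 1 : ℕ) : ℂ) := by push_cast; ring
    rw [this]
    exact_mod_cast Nat.succ_ne_zero m
  set Cinv : ℂ := ((m : ℂ) + 1)⁻¹ with hCinv
  have hconjCinv : conj' Cinv = Cinv := by
    rw [hCinv, map_inv₀, map_add, map_natCast, map_one]
  set Δd : ℕ → Matrix (Fin n) (Fin n) ℂ := fun j => Matrix.of fun i k =>
    Cinv * (conj' lam ^ j * (r i * conj' (x k)) + lam ^ (m - j) * (x i * conj' (rp k)))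
    with hΔd
  have hΔde : ∀ j i k, Δd j i k
      = Cinv * (conj' lam ^ j * (r i * conj' (x k)) + lam ^ (m - j) * (x i * conj' (rp k))) := by
    intro j i k; rw [hΔd]; rfl
  have hpalD : ∀ j ≤ m, Δd (m - j) = (Δd j).conjTranspose := by
    intro j hj
    ext i k
    rw [Matrix.conjTranspose_apply, hΔde, hΔde, Nat.sub_sub_self hj, RCLike.star_def]
    simp only [map_mul, map_add, map_pow, Complex.conj_conj, hconjCinv]
    rw [hrpe i, hrpce k]
    linear_combination (Cinv * (x i * conj' (x k))) * hkey j hj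
  have hinner : ∀ (j : ℕ) (i : Fin n), ∑ k, Δd j i k * x k = Cinv * (conj' lam ^ j * r i) := by
    intro j i
    have h1 : ∀ k ∈ (Finset.univ : Finset (Fin n)), Δd j i k * x k
        = (Cinv * (conj' lam ^ j * r i)) * (x k * conj' (x k))
          + (Cinv * (lam ^ (m - j) * x i)) * (conj' (rp k) * x k) := by
      intro k _
      rw [hΔde]
      ring
    rw [Finset.sum_congr rfl h1, Finset.sum_add_distrib, ← Finset.mul_sum, ← Finset.mul_sum,
      hxc1, hxrp, mul_one, mul_zero, add_zero]
  have hmulD : (evalP m Δd lam).mulVec x = r := by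
    funext i
    rw [evalP_mulVec]
    have h2 : ∀ j ∈ Finset.range (m + 1),
        lam ^ j * ∑ k, Δd j i k * x k = Cinv * r i := by
      intro j _
      rw [hinner j i,
        show lam ^ j * (Cinv * (conj' lam ^ j * r i))
          = (lam ^ j * conj' lam ^ j) * (Cinv * r i) from by ring,
        hpow j, one_mul]
    rw [Finset.sum_congr rfl h2, Finset.sum_const, Finset.card_range, nsmul_eq_mul]
    rw [hCinv]
    push_cast
    rw [← mul_assoc, mul_inv_cancel₀ hM1, one_mul]
  have heqD : (evalP m A lam).mulVec x + (evalP m Δd lam).mulVec x = 0 := by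
    rw [hmulD, hr]
    funext i
    simp
  -- Frobenius norms of the optimal perturbation
  have hMR : ((m:ℝ) + 1) ≠ 0 := by positivity
  have hfrobD : ∀ j ∈ Finset.range (m + 1),
      frobNorm (Δd j) ^ 2
        = (2 * (∑ i, ‖r i‖ ^ 2) - ‖c‖ ^ 2) / ((m : ℝ) + 1) ^ 2 := by
    intro j _
    have hCn : ‖Cinv‖ ^ 2 = (((m : ℝ) + 1) ^ 2)⁻¹ := by
      rw [hCinv, norm_inv]
      have h4 : ((m : ℂ) + 1) = ((m + 1 : ℕ) : ℂ) := by push_cast; ring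
      rw [h4, Complex.norm_natCast, inv_pow]
      push_cast
      ring
    have hrowD : ∀ i, ∑ k, ‖Δd j i k‖ ^ 2
        = ‖Cinv‖ ^ 2 * (‖r i‖ ^ 2
            + ‖x i‖ ^ 2 * ((∑ i, ‖r i‖ ^ 2) - ‖c‖ ^ 2)) := by
      intro i
      have hsplit : ∀ k ∈ (Finset.univ : Finset (Fin n)), ‖Δd j i k‖ ^ 2
          = ‖Cinv‖ ^ 2 * ‖(conj' lam ^ j * (r i * conj' (x k)))
              + (lam ^ (m - j) * (x i * conj' (rp k)))‖ ^ 2 := by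
        intro k _
        rw [hΔde, norm_mul, mul_pow]
      rw [Finset.sum_congr rfl hsplit, ← Finset.mul_sum, sum_norm_sq_add]
      have hf : ∑ k, ‖conj' lam ^ j * (r i * conj' (x k))‖ ^ 2 = ‖r i‖ ^ 2 := by
        have h5 : ∀ k ∈ (Finset.univ : Finset (Fin n)),
            ‖conj' lam ^ j * (r i * conj' (x k))‖ ^ 2 = ‖r i‖ ^ 2 * ‖x k‖ ^ 2 := by
          intro k _
          rw [norm_mul, norm_mul, norm_pow, RCLike.norm_conj, hlam, one_pow, one_mul,
            RCLike.norm_conj, mul_pow]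
        rw [Finset.sum_congr rfl h5, ← Finset.mul_sum, hxR, mul_one]
      have hg : ∑ k, ‖lam ^ (m - j) * (x i * conj' (rp k))‖ ^ 2
          = ‖x i‖ ^ 2 * ((∑ i, ‖r i‖ ^ 2) - ‖c‖ ^ 2) := by
        have h6 : ∀ k ∈ (Finset.univ : Finset (Fin n)),
            ‖lam ^ (m - j) * (x i * conj' (rp k))‖ ^ 2 = ‖x i‖ ^ 2 * ‖rp k‖ ^ 2 := by
          intro k _
          rw [norm_mul, norm_mul, norm_pow, hlam, one_pow, one_mul, RCLike.norm_conj, mul_pow]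
        rw [Finset.sum_congr rfl h6, ← Finset.mul_sum, hrpR]
      have hcross : ∑ k, (conj' lam ^ j * (r i * conj' (x k)))
          * conj' (lam ^ (m - j) * (x i * conj' (rp k))) = 0 := by
        have h7 : ∀ k ∈ (Finset.univ : Finset (Fin n)),
            (conj' lam ^ j * (r i * conj' (x k)))
              * conj' (lam ^ (m - j) * (x i * conj' (rp k)))
            = (conj' lam ^ j * conj' lam ^ (m - j) * (r i * conj' (x i)))
                * (rp k * conj' (x k)) := by
          intro k _
          simp only [map_mul, map_pow, Complex.conj_conj]
          ring
        rw [Finset.sum_congr rfl h7, ← Finset.mul_sum, hrpx, mul_zero]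
      rw [hf, hg, hcross, Complex.zero_re]
      ring
    have hnn : (0:ℝ) ≤ ∑ i, ∑ k, ‖Δd j i k‖ ^ 2 :=
      Finset.sum_nonneg fun i _ => Finset.sum_nonneg fun k _ => sq_nonneg _
    rw [frobNorm, Real.sq_sqrt hnn,
      Finset.sum_congr rfl fun i (_ : i ∈ Finset.univ) => hrowD i]
    rw [← Finset.mul_sum, Finset.sum_add_distrib, ← Finset.sum_mul, hxR, hCn]
    field_simp
    ring
  have hsumD : ∑ j ∈ Finset.range (m + 1), frobNorm (Δd j) ^ 2
      = (2 * (∑ i, ‖r i‖ ^ 2) - ‖c‖ ^ 2) / ((m : ℝ) + 1) := by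
    rw [Finset.sum_congr rfl hfrobD, Finset.sum_const, Finset.card_range, nsmul_eq_mul]
    push_cast
    field_simp
  -- lower bound for arbitrary admissible perturbations
  have hlb : ∀ e ∈ {e : ℝ | ∃ Δ : ℕ → Matrix (Fin n) (Fin n) ℂ,
      (∀ j ≤ m, Δ (m - j) = (Δ j).conjTranspose) ∧
      (evalP m A lam).mulVec x + (evalP m Δ lam).mulVec x = 0 ∧
      e = Real.sqrt (∑ j ∈ Finset.range (m + 1), frobNorm (Δ j) ^ 2)},
      Real.sqrt ((2 * (∑ i, ‖r i‖ ^ 2) - ‖c‖ ^ 2) / ((m : ℝ) + 1)) ≤ e := by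
    rintro e ⟨Δ, hpd, heq, rfl⟩
    apply Real.sqrt_le_sqrt
    have hGx : (evalP m Δ lam).mulVec x = r := by
      rw [hr]; exact (neg_eq_of_add_eq_zero_right heq).symm
    have hGH : (evalP m Δ lam).conjTranspose = conj' lam ^ m • evalP m Δ lam := by
      have h1 : (evalP m Δ lam).conjTranspose
          = ∑ j ∈ Finset.range (m + 1), conj' lam ^ j • Δ (m - j) := by
        rw [evalP, Matrix.conjTranspose_sum]
        refine Finset.sum_congr rfl fun j hj => ?_
        rw [Matrix.conjTranspose_smul, ← hpd j (Finset.mem_range_succ_iff.mp hj)]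
        congr 1
        rw [star_pow, RCLike.star_def]
      have h2 := Finset.sum_range_reflect (fun j => conj' lam ^ j • Δ (m - j)) (m + 1)
      simp only [Nat.add_sub_cancel] at h2
      rw [h1, ← h2]
      have h3 : ∀ j ∈ Finset.range (m + 1),
          conj' lam ^ (m - j) • Δ (m - (m - j)) = conj' lam ^ m • (lam ^ j • Δ j) := by
        intro j hj
        have hj' : j ≤ m := Finset.mem_range_succ_iff.mp hj
        rw [Nat.sub_sub_self hj', smul_smul]
        congr 1
        have h4 : conj' lam ^ (m - j) * (conj' lam ^ j * lam ^ j)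
            = conj' lam ^ m * lam ^ j := by
          rw [← mul_assoc, ← pow_add, Nat.sub_add_cancel hj']
        calc conj' lam ^ (m - j)
            = conj' lam ^ (m - j) * (lam ^ j * conj' lam ^ j) := by rw [hpow j, mul_one]
          _ = conj' lam ^ m * lam ^ j := by rw [← h4]; ring
      rw [Finset.sum_congr rfl h3, ← Finset.smul_sum, evalP]
    have hGHx : (evalP m Δ lam).conjTranspose.mulVec x = conj' lam ^ m • r := by
      rw [hGH, Matrix.smul_mulVec, hGx]
    have hml := matrix_lower x hxR (evalP m Δ lam)
    rw [hGx, hGHx] at hml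
    have e2 : ∑ k, ‖(conj' lam ^ m • r) k‖ ^ 2 = ∑ i, ‖r i‖ ^ 2 := by
      refine Finset.sum_congr rfl fun k _ => ?_
      rw [Pi.smul_apply, smul_eq_mul, norm_mul, norm_pow, RCLike.norm_conj, hlam,
        one_pow, one_mul]
    have e3 : ‖∑ i, conj' (x i) * r i‖ ^ 2 = ‖c‖ ^ 2 := by
      have h8 : ∑ i, conj' (x i) * r i = c := by
        rw [hcdef]; exact Finset.sum_congr rfl fun i _ => by ring
      rw [h8]
    rw [e2, e3] at hml
    -- entrywise Cauchy-Schwarz over the coefficients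
    have hcs2 : ∑ i, ∑ k, ‖evalP m Δ lam i k‖ ^ 2
        ≤ ((m:ℝ) + 1) * ∑ j ∈ Finset.range (m + 1), frobNorm (Δ j) ^ 2 := by
      have hpt : ∀ i k : Fin n, ‖evalP m Δ lam i k‖ ^ 2
          ≤ ((m:ℝ) + 1) * ∑ j ∈ Finset.range (m + 1), ‖Δ j i k‖ ^ 2 := by
        intro i k
        have h1 : ‖evalP m Δ lam i k‖ ≤ ∑ j ∈ Finset.range (m + 1), ‖Δ j i k‖ := by
          rw [evalP_apply]
          refine (norm_sum_le _ _).trans (le_of_eq ?_)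
          refine Finset.sum_congr rfl fun j _ => ?_
          rw [norm_mul, norm_pow, hlam, one_pow, one_mul]
        have h2 : (∑ j ∈ Finset.range (m + 1), ‖Δ j i k‖) ^ 2
            ≤ ((m:ℝ) + 1) * ∑ j ∈ Finset.range (m + 1), ‖Δ j i k‖ ^ 2 := by
          have h9 := sq_sum_le_card_mul_sum_sq
            (s := Finset.range (m + 1)) (f := fun j => ‖Δ j i k‖)
          rw [Finset.card_range] at h9
          push_cast at h9 ⊢
          exact h9
        calc ‖evalP m Δ lam i k‖ ^ 2 ≤ (∑ j ∈ Finset.range (m + 1), ‖Δ j i k‖) ^ 2 :=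
              pow_le_pow_left₀ (norm_nonneg _) h1 2
          _ ≤ _ := h2
      calc ∑ i, ∑ k, ‖evalP m Δ lam i k‖ ^ 2
          ≤ ∑ i : Fin n, ∑ k : Fin n,
              ((m:ℝ) + 1) * ∑ j ∈ Finset.range (m + 1), ‖Δ j i k‖ ^ 2 :=
            Finset.sum_le_sum fun i _ => Finset.sum_le_sum fun k _ => hpt i k
        _ = ((m:ℝ) + 1) * ∑ j ∈ Finset.range (m + 1), frobNorm (Δ j) ^ 2 := by
            rw [show ∑ i : Fin n, ∑ k : Fin n,
                ((m:ℝ) + 1) * ∑ j ∈ Finset.range (m + 1), ‖Δ j i k‖ ^ 2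
              = ((m:ℝ) + 1) * ∑ i : Fin n, ∑ k : Fin n,
                  ∑ j ∈ Finset.range (m + 1), ‖Δ j i k‖ ^ 2 from by
              rw [Finset.mul_sum]
              exact Finset.sum_congr rfl fun i _ => by rw [Finset.mul_sum]]
            congr 1
            rw [show ∑ i : Fin n, ∑ k : Fin n, ∑ j ∈ Finset.range (m + 1), ‖Δ j i k‖ ^ 2
              = ∑ j ∈ Finset.range (m + 1), ∑ i : Fin n, ∑ k : Fin n, ‖Δ j i k‖ ^ 2 from by
              rw [Finset.sum_congr rfl fun i (_ : i ∈ Finset.univ) =>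
                (Finset.sum_comm (s := Finset.univ) (t := Finset.range (m+1))
                  (f := fun k j => ‖Δ j i k‖ ^ 2)), Finset.sum_comm]]
            refine Finset.sum_congr rfl fun j _ => ?_
            have hnn : (0:ℝ) ≤ ∑ i, ∑ k, ‖Δ j i k‖ ^ 2 :=
              Finset.sum_nonneg fun i _ => Finset.sum_nonneg fun k _ => sq_nonneg _
            rw [frobNorm, Real.sq_sqrt hnn]
    have hfnn : (0:ℝ) ≤ ∑ j ∈ Finset.range (m + 1), frobNorm (Δ j) ^ 2 :=
      Finset.sum_nonneg fun j _ => sq_nonneg _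
    have hMpos : (0:ℝ) < (m:ℝ) + 1 := by positivity
    rw [div_le_iff₀ hMpos]
    calc 2 * (∑ i, ‖r i‖ ^ 2) - ‖c‖ ^ 2
        ≤ ∑ i, ∑ k, ‖evalP m Δ lam i k‖ ^ 2 := by linarith [hml]
      _ ≤ ((m:ℝ) + 1) * ∑ j ∈ Finset.range (m + 1), frobNorm (Δ j) ^ 2 := hcs2
      _ = (∑ j ∈ Finset.range (m + 1), frobNorm (Δ j) ^ 2) * ((m:ℝ) + 1) := by ring
  -- membership of the optimal value
  have hmem : Real.sqrt ((2 * (∑ i, ‖r i‖ ^ 2) - ‖c‖ ^ 2) / ((m : ℝ) + 1))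
      ∈ {e : ℝ | ∃ Δ : ℕ → Matrix (Fin n) (Fin n) ℂ,
      (∀ j ≤ m, Δ (m - j) = (Δ j).conjTranspose) ∧
      (evalP m A lam).mulVec x + (evalP m Δ lam).mulVec x = 0 ∧
      e = Real.sqrt (∑ j ∈ Finset.range (m + 1), frobNorm (Δ j) ^ 2)} :=
    ⟨Δd, hpalD, heqD, by rw [hsumD]⟩
  have hInf : etaF_Hpal m A lam x
      = Real.sqrt ((2 * (∑ i, ‖r i‖ ^ 2) - ‖c‖ ^ 2) / ((m : ℝ) + 1)) := by
    rw [etaF_Hpal]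
    exact le_antisymm (csInf_le ⟨_, hlb⟩ hmem) (le_csInf ⟨_, hmem⟩ hlb)
  have hRr : vnorm r ^ 2 = ∑ i, ‖r i‖ ^ 2 := by
    rw [vnorm, Real.sq_sqrt hR0]
  have hcr : ‖dotProduct (star r) x‖ ^ 2 = ‖c‖ ^ 2 := by
    have h1 : dotProduct (star r) x = conj' c := by
      rw [dotProduct, hcdef, map_sum]
      refine Finset.sum_congr rfl fun i _ => ?_
      rw [Pi.star_apply, map_mul, RingHomCompTriple.comp_apply, RingHom.id_apply,
        Complex.star_def]
    rw [h1, RCLike.norm_conj]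
  constructor
  · rw [hInf, hRr, hcr]
  · rw [hInf]
    have hMpos : (0:ℝ) < (m:ℝ) + 1 := by positivity
    calc Real.sqrt ((2 * (∑ i, ‖r i‖ ^ 2) - ‖c‖ ^ 2) / ((m : ℝ) + 1))
        ≤ Real.sqrt (2 * (∑ i, ‖r i‖ ^ 2) / ((m : ℝ) + 1)) := by
          apply Real.sqrt_le_sqrt
          gcongr
          linarith [sq_nonneg ‖c‖]
      _ = Real.sqrt 2 * vnorm r / Real.sqrt ((m : ℝ) + 1) := by
          rw [Real.sqrt_div (mul_nonneg (by norm_num) hR0) ((m:ℝ) + 1),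
            Real.sqrt_mul (show (0:ℝ) ≤ 2 by norm_num) (∑ i, ‖r i‖ ^ 2)]
          rw [show vnorm r = Real.sqrt (∑ i, ‖r i‖ ^ 2) from by rw [vnorm]]
end
end

section
/- Let P be a regular H-palindromic matrix polynomial of degree m with n×n coefficients, let λ ∈ ℂ with |λ| = 1, and let x ∈ ℂⁿ with ‖x‖₂ = 1; set r := −P(λ)x. Then the spectral-norm structured backward error over the class S_p of H-palindromic polynomials of degree m satisfies η₂^{S_p}(λ, x, P) = ‖r‖₂/√(m+1); in particular it equals the unstructured backward error η₂(λ, x, P) = ‖r‖₂/‖Λ_m‖₂ (note ‖Λ_m‖₂² = m+1 when |λ| = 1). -/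
open Matrix
set_option synthInstance.maxHeartbeats 1000000
set_option maxHeartbeats 1000000
set_option linter.unusedVariables false
set_option linter.deprecated false


noncomputable section

/-- Spectral-norm structured backward error over H-palindromic polynomials of degree `m`. -/
def eta2_Hpal {n : ℕ} (m : ℕ) (A : ℕ → Matrix (Fin n) (Fin n) ℂ) (lam : ℂ)
    (x : Fin n → ℂ) : ℝ :=
  sInf { e : ℝ | ∃ Δ : ℕ → Matrix (Fin n) (Fin n) ℂ,
    (∀ j ≤ m, Δ (m - j) = (Δ j).conjTranspose) ∧
    (evalP m A lam).mulVec x + (evalP m Δ lam).mulVec x = 0 ∧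
    e = Real.sqrt (∑ j ∈ Finset.range (m + 1), specNorm (Δ j) ^ 2) }

section AuxStmt12

variable {n : ℕ}

abbrev toE (y : Fin n → ℂ) : EuclideanSpace ℂ (Fin n) := (WithLp.equiv 2 (Fin n → ℂ)).symm y

lemma vnorm_eq (y : Fin n → ℂ) : vnorm y = ‖toE y‖ := by
  rw [EuclideanSpace.norm_eq]; rfl

lemma toE_add (a b : Fin n → ℂ) : toE (a + b) = toE a + toE b := rfl
lemma toE_smul (c : ℂ) (a : Fin n → ℂ) : toE (c • a) = c • toE a := rfl

lemma dot_eq (a b : Fin n → ℂ) : star a ⬝ᵥ b = @inner ℂ _ _ (toE a) (toE b) := by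
  simp [dotProduct, PiLp.inner_apply, RCLike.inner_apply, mul_comm]

lemma vnorm_mulVec_le (A : Matrix (Fin n) (Fin n) ℂ) (v : Fin n → ℂ) :
    vnorm (A.mulVec v) ≤ specNorm A * vnorm v := by
  rw [vnorm_eq, vnorm_eq]
  have h : toE (A.mulVec v) = Matrix.toEuclideanCLM (𝕜 := ℂ) A (toE v) := by
    exact (Matrix.toEuclideanCLM_toLp A v).symm
  rw [h]
  exact (Matrix.toEuclideanCLM (𝕜 := ℂ) A).le_opNorm _

lemma specNorm_smul (c : ℂ) (A : Matrix (Fin n) (Fin n) ℂ) :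
    specNorm (c • A) = ‖c‖ * specNorm A := by
  unfold specNorm
  rw [_root_.map_smul]
  exact norm_smul c (Matrix.toEuclideanCLM (𝕜 := ℂ) A)

lemma specNorm_le_of (A : Matrix (Fin n) (Fin n) ℂ) (C : ℝ) (hC : 0 ≤ C)
    (h : ∀ v, vnorm (A.mulVec v) ≤ C * vnorm v) : specNorm A ≤ C := by
  apply ContinuousLinearMap.opNorm_le_bound _ hC
  intro w
  have h2 := h (WithLp.equiv 2 (Fin n → ℂ) w)
  rw [vnorm_eq, vnorm_eq] at h2
  exact h2

lemma vnorm_nonneg (y : Fin n → ℂ) : 0 ≤ vnorm y := Real.sqrt_nonneg _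

lemma vnorm_smul (c : ℂ) (a : Fin n → ℂ) : vnorm (c • a) = ‖c‖ * vnorm a := by
  rw [vnorm_eq, vnorm_eq, toE_smul, norm_smul]

lemma outer_mulVec (a b v : Fin n → ℂ) :
    (Matrix.vecMulVec a (star b)).mulVec v = (star b ⬝ᵥ v) • a := by
  funext i
  simp only [Matrix.mulVec, dotProduct, Matrix.vecMulVec_apply, Pi.smul_apply,
    smul_eq_mul, Finset.sum_mul]
  exact Finset.sum_congr rfl fun j _ => by simp; ring

lemma outer_conjT (a b : Fin n → ℂ) :
    (Matrix.vecMulVec a (star b)).conjTranspose = Matrix.vecMulVec b (star a) := by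
  ext i j
  simp [Matrix.vecMulVec_apply, Matrix.conjTranspose_apply, mul_comm]

lemma dot_self (a : Fin n → ℂ) : star a ⬝ᵥ a = ((vnorm a : ℝ) : ℂ)^2 := by
  rw [dot_eq, vnorm_eq]
  exact_mod_cast inner_self_eq_norm_sq_to_K (𝕜 := ℂ) (E := EuclideanSpace ℂ (Fin n)) (toE a)

lemma vnorm_pos {y : Fin n → ℂ} (hy : y ≠ 0) : 0 < vnorm y := by
  rw [vnorm_eq]
  rw [norm_pos_iff]
  intro h
  exact hy ((WithLp.equiv 2 (Fin n → ℂ)).symm.injective (h.trans rfl))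

lemma exists_good_H (x s : Fin n → ℂ) (hx : vnorm x = 1)
    (ht : (starRingEnd ℂ) (star x ⬝ᵥ s) = star x ⬝ᵥ s) :
    ∃ H : Matrix (Fin n) (Fin n) ℂ, H.conjTranspose = H ∧ H.mulVec x = s ∧
      specNorm H ≤ vnorm s := by
  set t : ℂ := star x ⬝ᵥ s with htdef
  have ht' : star t = t := ht
  have htr : ((t.re : ℝ) : ℂ) = t := Complex.conj_eq_iff_re.mp ht
  set tr : ℝ := t.re with htrdef
  have hxx : star x ⬝ᵥ x = 1 := by
    rw [dot_self, hx]; norm_num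
  have hXnorm : ‖toE x‖ = 1 := by rw [← vnorm_eq, hx]
  by_cases hw : s - t • x = 0
  · -- s = t • x
    have hs : s = t • x := by rwa [sub_eq_zero] at hw
    refine ⟨t • Matrix.vecMulVec x (star x), ?_, ?_, ?_⟩
    · rw [Matrix.conjTranspose_smul, outer_conjT, ht']
    · rw [Matrix.smul_mulVec, outer_mulVec, hxx, one_smul, ← hs]
    · apply specNorm_le_of _ _ (vnorm_nonneg s)
      intro v
      rw [Matrix.smul_mulVec, outer_mulVec, smul_smul, vnorm_smul, hs, vnorm_smul, hx,
        mul_one, norm_mul]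
      have : ‖star x ⬝ᵥ v‖ ≤ vnorm v := by
        rw [dot_eq, vnorm_eq]
        calc ‖inner ℂ (toE x) (toE v)‖ ≤ ‖toE x‖ * ‖toE v‖ := norm_inner_le_norm _ _
        _ = ‖toE v‖ := by rw [hXnorm, one_mul]
      rw [mul_one]
      exact mul_le_mul_of_nonneg_left this (norm_nonneg t)
  · set w : Fin n → ℂ := s - t • x with hwdef
    have hβpos : 0 < vnorm w := vnorm_pos hw
    set β : ℝ := vnorm w with hβdef
    have hβ0 : (β : ℂ) ≠ 0 := by
      exact_mod_cast Complex.ofReal_ne_zero.mpr (ne_of_gt hβpos)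
    set u : Fin n → ℂ := ((β : ℂ)⁻¹) • w with hudef
    have hxw : star x ⬝ᵥ w = 0 := by
      rw [hwdef, dotProduct_sub, dotProduct_smul, hxx]
      simp [htdef]
    have hxu : star x ⬝ᵥ u = 0 := by
      rw [hudef, dotProduct_smul, hxw, smul_zero]
    have hux : star u ⬝ᵥ x = 0 := by
      have h1 : star (star x ⬝ᵥ u) = star u ⬝ᵥ x := by
        rw [Matrix.star_dotProduct, star_star]
      rw [← h1, hxu, star_zero]
    have hww : star w ⬝ᵥ w = ((β : ℂ))^2 := dot_self w
    have hstaru : star u = ((β : ℂ)⁻¹) • star w := by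
      rw [hudef, star_smul]
      congr 1
      simp [Complex.conj_ofReal]
    have huu : star u ⬝ᵥ u = 1 := by
      rw [hudef, hstaru, smul_dotProduct, dotProduct_smul, hww, smul_eq_mul,
        smul_eq_mul]
      field_simp
    have hwu : w = (β : ℂ) • u := by
      rw [hudef, smul_smul, mul_inv_cancel₀ hβ0, one_smul]
    have hs : s = t • x + w := by rw [hwdef]; abel
    -- Euclidean versions
    have hXU : inner ℂ (toE x) (toE u) = 0 := by rw [← dot_eq]; exact hxu
    have hXW : inner ℂ (toE x) (toE w) = 0 := by rw [← dot_eq]; exact hxw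
    have hUnorm : ‖toE u‖ = 1 := by
      rw [← vnorm_eq, hudef, vnorm_smul, ← hβdef]
      rw [norm_inv]
      simp [Complex.norm_real, abs_of_pos hβpos, inv_mul_cancel₀ (ne_of_gt hβpos)]
    have hWnorm : ‖toE w‖ = β := (vnorm_eq w).symm
    -- ‖s‖² = tr² + β²
    have hs2 : vnorm s ^ 2 = tr ^ 2 + β ^ 2 := by
      rw [vnorm_eq, hs]
      rw [show toE (t • x + w) = t • toE x + toE w from rfl]
      rw [norm_add_sq (𝕜 := ℂ)]
      have h0 : inner ℂ (t • toE x) (toE w) = 0 := by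
        rw [inner_smul_left, hXW, mul_zero]
      rw [h0, norm_smul, hXnorm, hWnorm, ← htr]
      simp [Complex.norm_real, Real.norm_eq_abs, sq_abs]
    refine ⟨t • Matrix.vecMulVec x (star x)
        + (β : ℂ) • (Matrix.vecMulVec u (star x) + Matrix.vecMulVec x (star u))
        - t • Matrix.vecMulVec u (star u), ?_, ?_, ?_⟩
    · have hβstar : star ((β : ℂ)) = (β : ℂ) := by simp [Complex.conj_ofReal]
      simp only [Matrix.conjTranspose_sub, Matrix.conjTranspose_add, Matrix.conjTranspose_smul,
        outer_conjT, ht', hβstar]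
      abel
    · rw [Matrix.sub_mulVec, Matrix.add_mulVec, Matrix.smul_mulVec,
        Matrix.smul_mulVec, Matrix.smul_mulVec, Matrix.add_mulVec,
        outer_mulVec, outer_mulVec, outer_mulVec, outer_mulVec, hxx, hux]
      simp only [one_smul, zero_smul, smul_zero, add_zero, sub_zero]
      rw [← hwu, ← hs]
    · apply specNorm_le_of _ _ (vnorm_nonneg s)
      intro v
      set a : ℂ := star x ⬝ᵥ v with hadef
      set b : ℂ := star u ⬝ᵥ v with hbdef
      have hHv : (t • Matrix.vecMulVec x (star x)
        + (β : ℂ) • (Matrix.vecMulVec u (star x) + Matrix.vecMulVec x (star u))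
        - t • Matrix.vecMulVec u (star u)).mulVec v
          = (t * a + β * b) • x + (β * a - t * b) • u := by
        rw [Matrix.sub_mulVec, Matrix.add_mulVec, Matrix.smul_mulVec,
          Matrix.smul_mulVec, Matrix.smul_mulVec, Matrix.add_mulVec,
          outer_mulVec, outer_mulVec, outer_mulVec, outer_mulVec, ← hadef, ← hbdef]
        funext i
        simp only [Pi.add_apply, Pi.sub_apply, Pi.smul_apply, smul_eq_mul]
        ring
      rw [hHv]
      -- norm computation in Euclidean space
      have hEnorm : vnorm ((t * a + β * b) • x + (β * a - t * b) • u)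
          = ‖(t * a + ↑β * b) • toE x + (↑β * a - t * b) • toE u‖ := by
        rw [vnorm_eq]; rfl
      rw [hEnorm]
      have horthsum : ‖(t * a + ↑β * b) • toE x + (↑β * a - t * b) • toE u‖ ^ 2
          = ‖t * a + ↑β * b‖ ^ 2 + ‖↑β * a - t * b‖ ^ 2 := by
        rw [norm_add_sq (𝕜 := ℂ)]
        have h0 : inner ℂ ((t * a + ↑β * b) • toE x) ((↑β * a - t * b) • toE u) = 0 := by
          rw [inner_smul_left, inner_smul_right, hXU]
          ring
        rw [h0]
        simp [norm_smul, hXnorm, hUnorm]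
      have hkey : ‖t * a + ↑β * b‖ ^ 2 + ‖↑β * a - t * b‖ ^ 2
          = (tr ^ 2 + β ^ 2) * (‖a‖ ^ 2 + ‖b‖ ^ 2) := by
        rw [← htr]
        simp only [Complex.sq_norm, Complex.normSq_apply,
          Complex.add_re, Complex.add_im, Complex.sub_re, Complex.sub_im,
          Complex.mul_re, Complex.mul_im, Complex.ofReal_re, Complex.ofReal_im]
        ring
      have hbessel : ‖a‖ ^ 2 + ‖b‖ ^ 2 ≤ ‖toE v‖ ^ 2 := by
        have hIxx : inner ℂ (toE x) (toE x) = 1 := by rw [← dot_eq]; exact hxx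
        have hIuu : inner ℂ (toE u) (toE u) = 1 := by rw [← dot_eq]; exact huu
        have hIux : inner ℂ (toE u) (toE x) = 0 := by rw [← dot_eq]; exact hux
        have horth : Orthonormal ℂ (![toE x, toE u]) := by
          rw [orthonormal_iff_ite]
          intro i j
          fin_cases i <;> fin_cases j <;>
            simp [hIxx, hIuu, hIux, hXU, hUnorm, hXnorm]
        have hb := horth.sum_inner_products_le (s := Finset.univ) (toE v)
        rw [Fin.sum_univ_two] at hb
        simpa [← dot_eq, ← hadef, ← hbdef] using hb
      have hfinal : ‖(t * a + ↑β * b) • toE x + (↑β * a - t * b) • toE u‖ ^ 2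
          ≤ (vnorm s * vnorm v) ^ 2 := by
        rw [horthsum, hkey]
        calc (tr ^ 2 + β ^ 2) * (‖a‖ ^ 2 + ‖b‖ ^ 2)
            ≤ (tr ^ 2 + β ^ 2) * ‖toE v‖ ^ 2 := by
              apply mul_le_mul_of_nonneg_left hbessel
              positivity
          _ = (vnorm s * vnorm v) ^ 2 := by rw [← hs2, vnorm_eq v]; ring
      have h1 := Real.sqrt_le_sqrt hfinal
      rwa [Real.sqrt_sq (norm_nonneg _), Real.sqrt_sq
        (mul_nonneg (vnorm_nonneg s) (vnorm_nonneg v))] at h1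

lemma specNorm_nonneg (A : Matrix (Fin n) (Fin n) ℂ) : 0 ≤ specNorm A := norm_nonneg _

lemma vnorm_sum_le {ι : Type*} (s : Finset ι) (f : ι → (Fin n → ℂ)) :
    vnorm (∑ i ∈ s, f i) ≤ ∑ i ∈ s, vnorm (f i) := by
  rw [vnorm_eq]
  have h : toE (∑ i ∈ s, f i) = ∑ i ∈ s, toE (f i) := WithLp.toLp_sum (p := 2) (s := s) (f := f)
  rw [h]
  refine (norm_sum_le _ _).trans ?_
  exact le_of_eq (Finset.sum_congr rfl fun i _ => (vnorm_eq (f i)).symm)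

lemma sum_mulVec' {ι : Type*} (s : Finset ι) (f : ι → Matrix (Fin n) (Fin n) ℂ)
    (v : Fin n → ℂ) : (∑ i ∈ s, f i).mulVec v = ∑ i ∈ s, (f i).mulVec v := by
  induction s using Finset.cons_induction with
  | empty => simp
  | cons a s ha ih => simp [Matrix.add_mulVec, ih]

end AuxStmt12

/-- spectral structured backward error, H-palindromic, |λ| = 1; it equals
the unstructured backward error `‖r‖₂/‖Λ_m‖₂` (and `‖Λ_m‖₂² = m + 1` when |λ| = 1). -/
theorem stmt_12 {m n : ℕ} (hm : 0 < m) (hn : 0 < n)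
    (A : ℕ → Matrix (Fin n) (Fin n) ℂ)
    (hpal : ∀ j ≤ m, A (m - j) = (A j).conjTranspose)
    (hreg : ∃ z : ℂ, (evalP m A z).det ≠ 0)
    (lam : ℂ) (hlam : ‖lam‖ = 1)
    (x : Fin n → ℂ) (hx : vnorm x = 1)
    (r : Fin n → ℂ) (hr : r = -(evalP m A lam).mulVec x) :
    eta2_Hpal m A lam x = vnorm r / Real.sqrt ((m : ℝ) + 1) ∧
      eta2_Hpal m A lam x = vnorm r / Real.sqrt (LamNormSq m lam) ∧
      LamNormSq m lam = (m : ℝ) + 1 := by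
  -- basic facts about lam
  have hlam0 : lam ≠ 0 := by
    intro h; rw [h] at hlam; simp at hlam
  have hnormSq : Complex.normSq lam = 1 := by
    rw [Complex.normSq_eq_norm_sq, hlam]; norm_num
  have hunit : lam * (starRingEnd ℂ) lam = 1 := by
    rw [Complex.mul_conj, hnormSq]; norm_num
  have hclam0 : (starRingEnd ℂ) lam ≠ 0 := by
    intro h
    apply hlam0
    have := congrArg (starRingEnd ℂ) h
    rwa [Complex.conj_conj, map_zero] at this
  -- square root μ of lam^m with |μ| = 1
  set θ : ℝ := Complex.arg (lam ^ m) with hθdef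
  set μ : ℂ := Complex.exp ((θ/2 : ℝ) * Complex.I) with hμdef
  have hμnorm : ‖μ‖ = 1 := by
    rw [hμdef]; exact Complex.norm_exp_ofReal_mul_I _
  have hμ0 : μ ≠ 0 := by intro h; rw [h] at hμnorm; simp at hμnorm
  have habs : ‖lam ^ m‖ = 1 := by
    rw [norm_pow, hlam, one_pow]
  have hμsq : μ ^ 2 = lam ^ m := by
    rw [hμdef, sq, ← Complex.exp_add]
    have h1 : ((θ/2 : ℝ) : ℂ) * Complex.I + ((θ/2 : ℝ) : ℂ) * Complex.I
        = (θ : ℂ) * Complex.I := by push_cast; ring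
    rw [h1]
    conv_rhs => rw [← Complex.norm_mul_exp_arg_mul_I (lam ^ m)]
    rw [habs, hθdef]
    norm_num
  have hμunit : μ * (starRingEnd ℂ) μ = 1 := by
    rw [Complex.mul_conj]
    have : Complex.normSq μ = 1 := by
      rw [Complex.normSq_eq_norm_sq, hμnorm]; norm_num
    rw [this]; norm_num
  have hconjlamm : ((starRingEnd ℂ) lam)^m = ((starRingEnd ℂ) μ)^2 := by
    rw [← map_pow, ← hμsq, map_pow]
  -- P(λ)ᴴ = conj(λ)^m • P(λ)
  have hconj_pow : ∀ j : ℕ, j ≤ m →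
      ((starRingEnd ℂ) lam)^(m-j) = ((starRingEnd ℂ) lam)^m * lam^j := by
    intro j hj
    have h1 : ((starRingEnd ℂ) lam)^(m-j) * lam^(m-j) = 1 := by
      rw [← mul_pow, mul_comm ((starRingEnd ℂ) lam) lam, hunit, one_pow]
    have h2 : (((starRingEnd ℂ) lam)^m * lam^j) * lam^(m-j) = 1 := by
      rw [mul_assoc, ← pow_add, Nat.add_sub_cancel' hj, ← mul_pow,
        mul_comm ((starRingEnd ℂ) lam) lam, hunit, one_pow]
    exact mul_right_cancel₀ (pow_ne_zero _ hlam0) (h1.trans h2.symm)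
  have hPH : (evalP m A lam).conjTranspose = ((starRingEnd ℂ) lam)^m • evalP m A lam := by
    unfold evalP
    calc (∑ j ∈ Finset.range (m+1), lam^j • A j).conjTranspose
        = ∑ j ∈ Finset.range (m+1), ((starRingEnd ℂ) lam)^j • A (m - j) := by
          rw [Matrix.conjTranspose_sum]
          refine Finset.sum_congr rfl fun j hj => ?_
          rw [Matrix.conjTranspose_smul, ← hpal j (Nat.lt_succ_iff.mp (Finset.mem_range.mp hj))]
          congr 1
          rw [star_pow]; rfl
      _ = ∑ j ∈ Finset.range (m+1),
            (fun k => ((starRingEnd ℂ) lam)^(m-k) • A k) (m - j) := by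
          refine Finset.sum_congr rfl fun j hj => ?_
          have hj' : j ≤ m := Nat.lt_succ_iff.mp (Finset.mem_range.mp hj)
          simp only
          rw [Nat.sub_sub_self hj']
      _ = ∑ j ∈ Finset.range (m+1), ((starRingEnd ℂ) lam)^(m-j) • A j := by
          have h := Finset.sum_range_reflect
            (fun k => ((starRingEnd ℂ) lam)^(m-k) • A k) (m+1)
          simp only [Nat.add_sub_cancel] at h
          exact h
      _ = ((starRingEnd ℂ) lam)^m • ∑ j ∈ Finset.range (m+1), lam^j • A j := by
          rw [Finset.smul_sum]
          refine Finset.sum_congr rfl fun j hj => ?_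
          rw [smul_smul, hconj_pow j (Nat.lt_succ_iff.mp (Finset.mem_range.mp hj))]
  have hPx : (evalP m A lam).mulVec x = -r := by rw [hr]; simp
  -- conj(x^H r) = conj(λ)^m (x^H r)
  have ht0 : (starRingEnd ℂ) (star x ⬝ᵥ r) = ((starRingEnd ℂ) lam)^m * (star x ⬝ᵥ r) := by
    have h1 : (starRingEnd ℂ) (star x ⬝ᵥ r) = star r ⬝ᵥ x := by
      rw [show ((starRingEnd ℂ) (star x ⬝ᵥ r) : ℂ) = star (star x ⬝ᵥ r) from rfl,
        Matrix.star_dotProduct, star_star]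
    calc (starRingEnd ℂ) (star x ⬝ᵥ r)
        = star r ⬝ᵥ x := h1
      _ = star (-(evalP m A lam).mulVec x) ⬝ᵥ x := by rw [← hr]
      _ = -(star ((evalP m A lam).mulVec x) ⬝ᵥ x) := by rw [star_neg, neg_dotProduct]
      _ = -((Matrix.vecMul (star x) (evalP m A lam).conjTranspose) ⬝ᵥ x) := by
          rw [Matrix.star_mulVec]
      _ = -(star x ⬝ᵥ ((evalP m A lam).conjTranspose.mulVec x)) := by
          rw [Matrix.dotProduct_mulVec]
      _ = -(star x ⬝ᵥ ((((starRingEnd ℂ) lam)^m • evalP m A lam).mulVec x)) := by rw [hPH]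
      _ = -(((starRingEnd ℂ) lam)^m * (star x ⬝ᵥ ((evalP m A lam).mulVec x))) := by
          rw [Matrix.smul_mulVec, dotProduct_smul, smul_eq_mul]
      _ = ((starRingEnd ℂ) lam)^m * (star x ⬝ᵥ r) := by
          rw [hPx, dotProduct_neg]; ring
  -- the vector s and its real inner product with x
  set s : Fin n → ℂ := ((starRingEnd ℂ) μ) • r with hsdef
  have hvs : vnorm s = vnorm r := by
    rw [hsdef, vnorm_smul]
    have : ‖(starRingEnd ℂ) μ‖ = 1 := by rw [RCLike.norm_conj, hμnorm]
    rw [this, one_mul]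
  have hts : (starRingEnd ℂ) (star x ⬝ᵥ s) = star x ⬝ᵥ s := by
    have h2 : star x ⬝ᵥ s = (starRingEnd ℂ) μ * (star x ⬝ᵥ r) := by
      rw [hsdef, dotProduct_smul, smul_eq_mul]
    rw [h2, _root_.map_mul, Complex.conj_conj, ht0, hconjlamm]
    calc μ * (((starRingEnd ℂ) μ)^2 * (star x ⬝ᵥ r))
        = (μ * (starRingEnd ℂ) μ) * ((starRingEnd ℂ) μ * (star x ⬝ᵥ r)) := by ring
      _ = (starRingEnd ℂ) μ * (star x ⬝ᵥ r) := by rw [hμunit, one_mul]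
  obtain ⟨H, hH1, hH2, hH3⟩ := exists_good_H x s hx hts
  -- the optimal perturbation
  have hm1 : ((m:ℂ)+1) ≠ 0 := by
    have := Nat.cast_add_one_ne_zero (R := ℂ) m
    exact_mod_cast this
  set c : ℕ → ℂ := fun j => ((m:ℂ)+1)⁻¹ * ((starRingEnd ℂ) lam)^j * μ with hcdef
  set Δ : ℕ → Matrix (Fin n) (Fin n) ℂ := fun j => c j • H with hΔdef
  -- scalar palindromic identity
  have hsc : ∀ j : ℕ, j ≤ m →
      ((starRingEnd ℂ) lam)^(m-j) * μ = lam^j * (starRingEnd ℂ) μ := by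
    intro j hj
    have hne : ((starRingEnd ℂ) lam)^j * μ ≠ 0 := mul_ne_zero (pow_ne_zero _ hclam0) hμ0
    apply mul_right_cancel₀ hne
    have e1 : ((starRingEnd ℂ) lam)^(m-j) * μ * (((starRingEnd ℂ) lam)^j * μ)
        = ((starRingEnd ℂ) lam)^m * μ^2 := by
      rw [show ((starRingEnd ℂ) lam)^(m-j) * μ * (((starRingEnd ℂ) lam)^j * μ)
        = (((starRingEnd ℂ) lam)^(m-j) * ((starRingEnd ℂ) lam)^j) * μ^2 by ring,
        ← pow_add, Nat.sub_add_cancel hj]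
    have e2 : lam^j * (starRingEnd ℂ) μ * (((starRingEnd ℂ) lam)^j * μ)
        = (lam * (starRingEnd ℂ) lam)^j * (μ * (starRingEnd ℂ) μ) := by
      rw [mul_pow]; ring
    rw [e1, e2, hμsq, ← mul_pow, mul_comm ((starRingEnd ℂ) lam) lam, hunit, hμunit]
    simp
  have hΔpal : ∀ j ≤ m, Δ (m - j) = (Δ j).conjTranspose := by
    intro j hj
    show c (m-j) • H = (c j • H).conjTranspose
    rw [Matrix.conjTranspose_smul, hH1]
    congr 1
    have hstarc : star (c j) = ((m:ℂ)+1)⁻¹ * (lam^j * (starRingEnd ℂ) μ) := by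
      have h0 : star (c j) = (starRingEnd ℂ) (c j) := rfl
      rw [h0, hcdef]
      simp only [_root_.map_mul, map_inv₀, _root_.map_pow, Complex.conj_conj]
      rw [show (starRingEnd ℂ) ((m:ℂ)+1) = ((m:ℂ)+1) by
        simp [map_add, Complex.conj_natCast]]
      ring
    rw [hstarc, hcdef]
    simp only
    rw [mul_assoc, hsc j hj]
  -- the sum identity
  have hsum : evalP m Δ lam = μ • H := by
    unfold evalP
    have hjj : ∀ j : ℕ, lam ^ j * c j = ((m:ℂ)+1)⁻¹ * μ := by
      intro j
      have h1 : lam^j * ((starRingEnd ℂ) lam)^j = 1 := by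
        rw [← mul_pow, hunit, one_pow]
      calc lam ^ j * c j
          = (lam^j * ((starRingEnd ℂ) lam)^j) * (((m:ℂ)+1)⁻¹ * μ) := by rw [hcdef]; ring
        _ = ((m:ℂ)+1)⁻¹ * μ := by rw [h1, one_mul]
    calc ∑ j ∈ Finset.range (m+1), lam^j • Δ j
        = ∑ j ∈ Finset.range (m+1), (((m:ℂ)+1)⁻¹ * μ) • H := by
          refine Finset.sum_congr rfl fun j _ => ?_
          rw [hΔdef]
          simp only
          rw [smul_smul, hjj j]
      _ = μ • H := by
          rw [Finset.sum_const, Finset.card_range, ← Nat.cast_smul_eq_nsmul ℂ, smul_smul]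
          congr 1
          push_cast
          field_simp
  have hconstraint : (evalP m A lam).mulVec x + (evalP m Δ lam).mulVec x = 0 := by
    rw [hPx, hsum, Matrix.smul_mulVec, hH2, hsdef, smul_smul, hμunit, one_smul]
    exact neg_add_cancel r
  -- value of the perturbation
  have hnormc : ∀ j : ℕ, ‖c j‖ = (((m:ℝ)+1))⁻¹ := by
    intro j
    rw [hcdef]
    simp only
    rw [norm_mul, norm_mul, norm_pow, RCLike.norm_conj, hlam, one_pow, hμnorm, norm_inv]
    rw [show ((m:ℂ)+1) = ((m+1 : ℕ) : ℂ) by push_cast; ring]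
    rw [Complex.norm_natCast]
    push_cast
    ring
  have hm1R : (0:ℝ) < (m:ℝ) + 1 := by positivity
  have hsqrtpos : (0:ℝ) < Real.sqrt ((m:ℝ)+1) := Real.sqrt_pos.mpr hm1R
  have hspecΔ : ∀ j : ℕ, specNorm (Δ j) = specNorm H / ((m:ℝ)+1) := by
    intro j
    rw [hΔdef]
    simp only
    rw [specNorm_smul, hnormc j]
    field_simp
  have he0 : Real.sqrt (∑ j ∈ Finset.range (m+1), specNorm (Δ j)^2)
      = specNorm H / Real.sqrt ((m:ℝ)+1) := by
    rw [Finset.sum_congr rfl (fun j _ => by rw [hspecΔ j])]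
    rw [Finset.sum_const, Finset.card_range, nsmul_eq_mul]
    rw [show ((m+1:ℕ):ℝ) * (specNorm H / ((m:ℝ)+1))^2 = (specNorm H)^2 / ((m:ℝ)+1) by
      push_cast; field_simp]
    rw [Real.sqrt_div (sq_nonneg _), Real.sqrt_sq (specNorm_nonneg H)]
  -- lower bound
  have hlower : ∀ e ∈ { e : ℝ | ∃ Δ' : ℕ → Matrix (Fin n) (Fin n) ℂ,
      (∀ j ≤ m, Δ' (m - j) = (Δ' j).conjTranspose) ∧
      (evalP m A lam).mulVec x + (evalP m Δ' lam).mulVec x = 0 ∧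
      e = Real.sqrt (∑ j ∈ Finset.range (m + 1), specNorm (Δ' j) ^ 2) },
      vnorm r / Real.sqrt ((m:ℝ)+1) ≤ e := by
    rintro e ⟨Δ', hpal', heq', rfl⟩
    have hΔx : (evalP m Δ' lam).mulVec x = r := by
      rw [hPx] at heq'
      rw [neg_add_eq_zero] at heq'
      exact heq'.symm
    have hbound : vnorm r ≤ ∑ j ∈ Finset.range (m+1), specNorm (Δ' j) := by
      rw [← hΔx]
      have hexp : (evalP m Δ' lam).mulVec x
          = ∑ j ∈ Finset.range (m+1), lam^j • ((Δ' j).mulVec x) := by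
        unfold evalP
        rw [sum_mulVec']
        exact Finset.sum_congr rfl fun j _ => Matrix.smul_mulVec _ _ _
      rw [hexp]
      refine (vnorm_sum_le _ _).trans ?_
      refine Finset.sum_le_sum fun j _ => ?_
      rw [vnorm_smul, norm_pow, hlam, one_pow, one_mul]
      have := vnorm_mulVec_le (Δ' j) x
      rwa [hx, mul_one] at this
    have hsumnonneg : (0:ℝ) ≤ ∑ j ∈ Finset.range (m+1), specNorm (Δ' j) :=
      Finset.sum_nonneg fun j _ => specNorm_nonneg _
    have hcs : (∑ j ∈ Finset.range (m+1), specNorm (Δ' j))^2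
        ≤ ((m:ℝ)+1) * ∑ j ∈ Finset.range (m+1), specNorm (Δ' j)^2 := by
      have h := sq_sum_le_card_mul_sum_sq (s := Finset.range (m+1))
        (f := fun j => specNorm (Δ' j))
      simpa [Finset.card_range] using h
    rw [div_le_iff₀ hsqrtpos]
    calc vnorm r ≤ ∑ j ∈ Finset.range (m+1), specNorm (Δ' j) := hbound
      _ ≤ Real.sqrt (((m:ℝ)+1) * ∑ j ∈ Finset.range (m+1), specNorm (Δ' j)^2) := by
          rw [← Real.sqrt_sq hsumnonneg]
          exact Real.sqrt_le_sqrt hcs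
      _ = Real.sqrt (∑ j ∈ Finset.range (m+1), specNorm (Δ' j)^2)
            * Real.sqrt ((m:ℝ)+1) := by
          rw [Real.sqrt_mul (le_of_lt hm1R), mul_comm]
  -- assembly
  have hmem : Real.sqrt (∑ j ∈ Finset.range (m+1), specNorm (Δ j)^2) ∈
      { e : ℝ | ∃ Δ' : ℕ → Matrix (Fin n) (Fin n) ℂ,
      (∀ j ≤ m, Δ' (m - j) = (Δ' j).conjTranspose) ∧
      (evalP m A lam).mulVec x + (evalP m Δ' lam).mulVec x = 0 ∧
      e = Real.sqrt (∑ j ∈ Finset.range (m + 1), specNorm (Δ' j) ^ 2) } :=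
    ⟨Δ, hΔpal, hconstraint, rfl⟩
  have hbdd : BddBelow { e : ℝ | ∃ Δ' : ℕ → Matrix (Fin n) (Fin n) ℂ,
      (∀ j ≤ m, Δ' (m - j) = (Δ' j).conjTranspose) ∧
      (evalP m A lam).mulVec x + (evalP m Δ' lam).mulVec x = 0 ∧
      e = Real.sqrt (∑ j ∈ Finset.range (m + 1), specNorm (Δ' j) ^ 2) } := by
    refine ⟨0, fun e he => ?_⟩
    obtain ⟨_, _, _, h⟩ := he
    rw [h]
    exact Real.sqrt_nonneg _
  have h1 : eta2_Hpal m A lam x ≤ specNorm H / Real.sqrt ((m:ℝ)+1) := by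
    have := csInf_le hbdd hmem
    rw [he0] at this
    exact this
  have h2 : vnorm r / Real.sqrt ((m:ℝ)+1) ≤ eta2_Hpal m A lam x :=
    le_csInf ⟨_, hmem⟩ hlower
  have h3 : specNorm H / Real.sqrt ((m:ℝ)+1) ≤ vnorm r / Real.sqrt ((m:ℝ)+1) := by
    gcongr
    rw [← hvs]
    exact hH3

  have heta : eta2_Hpal m A lam x = vnorm r / Real.sqrt ((m:ℝ)+1) :=
    le_antisymm (h1.trans h3) h2
  have hLam : LamNormSq m lam = (m:ℝ)+1 := by
    unfold LamNormSq
    rw [Finset.sum_congr rfl (fun j _ => by rw [hlam, one_pow])]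
    rw [Finset.sum_const, Finset.card_range, nsmul_eq_mul]
    push_cast
    ring
  refine ⟨heta, ?_, hLam⟩
  rw [hLam]
  exact heta
end
end

section
/- Let P be a regular H-palindromic matrix polynomial of degree m ≥ 1 with n×n coefficients, let v ∈ ℂ^m with ‖v‖₂ = 1, and let L(z) = zX + Y be a pencil in L₁(P) with right ansatz vector v that is either H-palindromic (X = Yᴴ) with Rv = v̄ or H-anti-palindromic (X = −Yᴴ) with Rv = −v̄; let S denote the corresponding class of structured pencil perturbations (ΔX = ΔYᴴ in the first case, ΔX = −ΔYᴴ in the second). Let λ ∈ ℂ with |λ| = 1 and x ∈ ℂⁿ with ‖x‖₂ = 1 and P(λ)x ≠ 0. Then √((m+1)/(2m)) ≤ η_F^S(λ, Λ_{m−1}(λ) ⊗ x, L) / η_F(λ, x, P) ≤ √2, and moreover η_F^S(λ, Λ_{m−1}(λ) ⊗ x, L) / η_F^{S_p}(λ, x, P) ≤ √2, where S_p is the class of H-palindromic matrix polynomials of degree m. For the spectral norm, √((m+1)/(2m)) ≤ η₂^S(λ, Λ_{m−1}(λ) ⊗ x, L) / η₂(λ, x, P) ≤ √2. -/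
noncomputable section

/-- `Λ_{m-1}(z) = (z^{m-1}, …, z, 1)ᵀ ∈ ℂ^m`. -/
def Lam1 (m : ℕ) (z : ℂ) : Fin m → ℂ := fun i => z ^ (m - 1 - (i : ℕ))

/-- Kronecker product of a vector in `ℂ^m` with a vector in `ℂ^n`. -/
def vKron {m n : ℕ} (u : Fin m → ℂ) (x : Fin n → ℂ) : Fin m × Fin n → ℂ :=
  fun p => u p.1 * x p.2

/-- Kronecker product `u ⊗ B` of a column vector `u ∈ ℂ^m` with an `n × n` matrix `B`,
an `mn × n` matrix. -/
def colKron {m n : ℕ} (u : Fin m → ℂ) (B : Matrix (Fin n) (Fin n) ℂ) :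
    Matrix (Fin m × Fin n) (Fin n) ℂ :=
  fun p j => u p.1 * B p.2 j

/-- Frobenius-norm structured backward error of `(λ, u)` for the pencil `L(z) = zX + Y`
over H-palindromic (`ε = 1`, `ΔX = ΔYᴴ`) or H-anti-palindromic (`ε = −1`, `ΔX = −ΔYᴴ`)
pencil perturbations. -/
def etaPencilF_Heps {m n : ℕ} (ε : ℂ) (X Y : Matrix (Fin m × Fin n) (Fin m × Fin n) ℂ)
    (lam : ℂ) (u : Fin m × Fin n → ℂ) : ℝ :=
  sInf { e : ℝ | ∃ ΔX ΔY : Matrix (Fin m × Fin n) (Fin m × Fin n) ℂ,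
    ΔX = ε • ΔY.conjTranspose ∧
    (lam • X + Y + lam • ΔX + ΔY).mulVec u = 0 ∧
    e = Real.sqrt (frobNorm ΔX ^ 2 + frobNorm ΔY ^ 2) }

/-- Spectral-norm structured backward error of `(λ, u)` for the pencil `L(z) = zX + Y`
over H-palindromic (`ε = 1`) or H-anti-palindromic (`ε = −1`) pencil perturbations. -/
def etaPencil2_Heps {m n : ℕ} (ε : ℂ) (X Y : Matrix (Fin m × Fin n) (Fin m × Fin n) ℂ)
    (lam : ℂ) (u : Fin m × Fin n → ℂ) : ℝ :=
  sInf { e : ℝ | ∃ ΔX ΔY : Matrix (Fin m × Fin n) (Fin m × Fin n) ℂ,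
    ΔX = ε • ΔY.conjTranspose ∧
    (lam • X + Y + lam • ΔX + ΔY).mulVec u = 0 ∧
    e = Real.sqrt (specNorm ΔX ^ 2 + specNorm ΔY ^ 2) }

lemma vnorm_nonneg_s17 {α : Type*} [Fintype α] (x : α → ℂ) : 0 ≤ vnorm x := Real.sqrt_nonneg _
lemma vnorm_sq {α : Type*} [Fintype α] (x : α → ℂ) : vnorm x ^ 2 = ∑ i, ‖x i‖ ^ 2 :=
  Real.sq_sqrt (Finset.sum_nonneg fun i _ => sq_nonneg _)

lemma vnorm_eq_euclidean {α : Type*} [Fintype α] (x : α → ℂ) :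
    vnorm x = ‖(WithLp.equiv 2 (α → ℂ)).symm x‖ := by
  rw [EuclideanSpace.norm_eq]
  rfl

lemma mulVec_vnorm_le_spec {α : Type*} [Fintype α] [DecidableEq α] (A : Matrix α α ℂ) (y : α → ℂ) :
    vnorm (A.mulVec y) ≤ specNorm A * vnorm y := by
  rw [vnorm_eq_euclidean, vnorm_eq_euclidean]
  have := Matrix.toEuclideanCLM_toLp (𝕜 := ℂ) A y
  calc ‖(WithLp.equiv 2 (α → ℂ)).symm (A.mulVec y)‖
      = ‖Matrix.toEuclideanCLM (𝕜 := ℂ) A ((WithLp.equiv 2 (α → ℂ)).symm y)‖ := rfl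
    _ ≤ _ := (Matrix.toEuclideanCLM (𝕜 := ℂ) A).le_opNorm _

lemma frob_nonneg {α : Type*} [Fintype α] (A : Matrix α α ℂ) : 0 ≤ frobNorm A := Real.sqrt_nonneg _
lemma frob_sq {α : Type*} [Fintype α] (A : Matrix α α ℂ) :
    frobNorm A ^ 2 = ∑ i, ∑ j, ‖A i j‖ ^ 2 :=
  Real.sq_sqrt (Finset.sum_nonneg fun i _ => Finset.sum_nonneg fun j _ => sq_nonneg _)

lemma cs_row {α : Type*} [Fintype α] (a y : α → ℂ) :
    ‖∑ j, a j * y j‖ ^ 2 ≤ (∑ j, ‖a j‖ ^ 2) * ∑ j, ‖y j‖ ^ 2 := by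
  calc ‖∑ j, a j * y j‖ ^ 2 ≤ (∑ j, ‖a j * y j‖) ^ 2 := by
        apply pow_le_pow_left₀ (norm_nonneg _) (norm_sum_le _ _)
    _ = (∑ j, ‖a j‖ * ‖y j‖) ^ 2 := by simp [norm_mul]
    _ ≤ _ := Finset.sum_mul_sq_le_sq_mul_sq _ _ _

lemma mulVec_vnorm_le_frob {α : Type*} [Fintype α] (A : Matrix α α ℂ) (y : α → ℂ) :
    vnorm (A.mulVec y) ≤ frobNorm A * vnorm y := by
  have h : vnorm (A.mulVec y) ^ 2 ≤ (frobNorm A * vnorm y) ^ 2 := by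
    rw [vnorm_sq, mul_pow, frob_sq, vnorm_sq, Finset.sum_mul]
    exact Finset.sum_le_sum fun i _ => cs_row (A i) y
  exact (pow_le_pow_iff_left₀ (vnorm_nonneg_s17 _) (mul_nonneg (frob_nonneg _) (vnorm_nonneg_s17 _)) two_ne_zero).mp h

lemma spec_le_frob {α : Type*} [Fintype α] [DecidableEq α] (A : Matrix α α ℂ) :
    specNorm A ≤ frobNorm A := by
  apply ContinuousLinearMap.opNorm_le_bound _ (frob_nonneg A)
  intro z
  have := mulVec_vnorm_le_frob A (WithLp.equiv 2 (α → ℂ) z)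
  rw [vnorm_eq_euclidean, vnorm_eq_euclidean] at this
  exact this

lemma spec_nonneg {α : Type*} [Fintype α] [DecidableEq α] (A : Matrix α α ℂ) : 0 ≤ specNorm A :=
  norm_nonneg _
lemma conj_mul_self (z : ℂ) : (starRingEnd ℂ) z * z = ((‖z‖ ^ 2 : ℝ) : ℂ) := by
  rw [Complex.conj_mul']; push_cast; rfl

open Complex in
lemma construct {N : Type*} [Fintype N] (μ : ℂ) (hμ : ‖μ‖ = 1)
    (u w : N → ℂ) (M : ℝ) (hM : 0 < M)
    (hu : ∑ p, ‖u p‖ ^ 2 = M)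
    (hc : (∑ p, (starRingEnd ℂ) (u p) * w p)
        = μ * (starRingEnd ℂ) (∑ p, (starRingEnd ℂ) (u p) * w p)) :
    ∃ ΔY : Matrix N N ℂ, (μ • ΔY.conjTranspose + ΔY).mulVec u = w ∧
      frobNorm ΔY ^ 2 ≤ (∑ p, ‖w p‖ ^ 2) / (2 * M) := by
  obtain ⟨ν, hν2⟩ : ∃ z : ℂ, z ^ 2 = μ := IsAlgClosed.exists_pow_nat_eq μ zero_lt_two
  have hνn : ‖ν‖ = 1 := by
    have h2 : ‖ν‖ ^ 2 = 1 := by rw [← norm_pow, hν2, hμ]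
    nlinarith [norm_nonneg ν]
  set cj := starRingEnd ℂ with hcj
  have hνν : ν * cj ν = 1 := by
    rw [hcj, Complex.mul_conj]; norm_cast
    rw [Complex.normSq_eq_norm_sq, hνn]; norm_num
  set c0 : ℂ := ∑ p, cj (u p) * w p with hc0def
  set w' : N → ℂ := fun p => cj ν * w p with hw'
  set c : ℂ := ∑ p, cj (u p) * w' p with hcdef
  have hc0 : c = cj ν * c0 := by
    rw [hcdef, hc0def, Finset.mul_sum]; exact Finset.sum_congr rfl fun p _ => by rw [hw']; ring
  have hcc : cj c = c := by
    have h1 : cj c = ν * cj c0 := by rw [hc0, map_mul, hcj, Complex.conj_conj]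
    have h2 : c = ν * cj c0 := by
      rw [hc0]; nth_rewrite 1 [hc]; rw [← hν2]
      linear_combination (ν * cj c0) * hνν
    exact h1.trans h2.symm
  set cR : ℝ := c.re with hcR
  have hcreal : c = (cR : ℂ) := (Complex.conj_eq_iff_re.mp hcc).symm
  set a : ℝ := 1 / M with ha
  set b : ℝ := -(cR / (2 * M ^ 2)) with hb
  set f : N → ℂ := fun p => (a : ℂ) * w' p + (b : ℂ) * u p with hf
  have hUc : ∑ p, cj (u p) * u p = ((M : ℝ) : ℂ) := by
    rw [← hu]
    rw [show ((∑ p, ‖u p‖ ^ 2 : ℝ) : ℂ) = ∑ p, ((‖u p‖ ^2 : ℝ) : ℂ) by push_cast; ring]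
    exact Finset.sum_congr rfl fun p _ => conj_mul_self _
  have hW' : ∑ p, ‖w' p‖ ^ 2 = ∑ p, ‖w p‖ ^ 2 := by
    refine Finset.sum_congr rfl fun p _ => ?_
    rw [hw']; rw [norm_mul, RCLike.norm_conj, hνn, one_mul]
  set W : ℝ := ∑ p, ‖w p‖ ^ 2 with hWdef
  have hWc : ∑ p, cj (w' p) * w' p = ((W : ℝ) : ℂ) := by
    rw [← hW']
    rw [show ((∑ p, ‖w' p‖ ^ 2 : ℝ) : ℂ) = ∑ p, ((‖w' p‖ ^2 : ℝ) : ℂ) by push_cast; ring]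
    exact Finset.sum_congr rfl fun p _ => conj_mul_self _
  set dR : ℝ := a * cR + b * M with hdR
  have hDc : ∑ p, cj (u p) * f p = ((dR : ℝ) : ℂ) := by
    have h1 : ∀ p, cj (u p) * f p = (a:ℂ) * (cj (u p) * w' p) + (b:ℂ) * (cj (u p) * u p) := by
      intro p; simp only [hf]; ring
    rw [Finset.sum_congr rfl fun p _ => h1 p, Finset.sum_add_distrib,
      ← Finset.mul_sum, ← Finset.mul_sum, ← hcdef, hUc, hcreal, hdR]
    push_cast; ring
  have hDc' : ∑ p, cj (f p) * u p = ((dR : ℝ) : ℂ) := by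
    have h1 : ∑ p, cj (f p) * u p = cj (∑ p, cj (u p) * f p) := by
      rw [map_sum]; exact Finset.sum_congr rfl fun p _ => by
        simp only [hcj, map_mul, Complex.conj_conj]; ring
    rw [h1, hDc, hcj, Complex.conj_ofReal]
  have hCc' : ∑ p, cj (w' p) * u p = ((cR : ℝ) : ℂ) := by
    have h2 : ∑ p, cj (w' p) * u p = cj (∑ p, cj (u p) * w' p) := by
      rw [map_sum]; exact Finset.sum_congr rfl fun p _ => by
        simp only [hcj, map_mul, Complex.conj_conj]; ring
    rw [h2, ← hcdef, hcc, hcreal]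
  set F : ℝ := a^2 * W + 2*a*b*cR + b^2*M with hFdef
  have hFc : ∑ p, cj (f p) * f p = ((F : ℝ) : ℂ) := by
    have h1 : ∀ p, cj (f p) * f p = (a:ℂ)^2 * (cj (w' p) * w' p) + (a:ℂ)*(b:ℂ) * (cj (u p) * w' p)
        + (a:ℂ)*(b:ℂ) * (cj (w' p) * u p) + (b:ℂ)^2 * (cj (u p) * u p) := by
      intro p; simp only [hf, map_add, map_mul, hcj, Complex.conj_conj, Complex.conj_ofReal]
      ring
    rw [Finset.sum_congr rfl fun p _ => h1 p]
    simp only [Finset.sum_add_distrib, ← Finset.mul_sum]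
    rw [hWc, ← hcdef, hcreal, hCc', hUc, hFdef]
    push_cast; ring
  set H : N → N → ℂ := fun p q => f p * cj (u q) + u p * cj (f q) with hH
  refine ⟨Matrix.of fun p q => (ν / 2) * H p q, ?_, ?_⟩
  · -- mulVec identity
    have key : μ * cj ν = ν := by rw [← hν2]; linear_combination ν * hνν
    funext p
    have hentry : ∀ q, (μ • (Matrix.of fun p q => (ν / 2) * H p q).conjTranspose
        + Matrix.of fun p q => (ν / 2) * H p q) p q = ν * H p q := by
      intro q
      have hHsym : cj (H q p) = H p q := by
        simp only [hH, map_add, map_mul, hcj, Complex.conj_conj]; ring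
      simp only [Matrix.add_apply, Matrix.smul_apply, Matrix.conjTranspose_apply, Matrix.of_apply,
        smul_eq_mul, star_mul', ← hcj]
      rw [show star (H q p) = cj (H q p) from rfl, hHsym,
        show star (ν / 2) = cj (ν / 2) from rfl, map_div₀]
      rw [show cj (2:ℂ) = 2 from map_ofNat cj 2]
      linear_combination (H p q / 2) * key
    show ∑ q, _ * u q = w p
    rw [Finset.sum_congr rfl fun q _ => by rw [hentry q]]
    have h1 : ∀ q, ν * H p q * u q
        = ν * (f p * (cj (u q) * u q)) + ν * (u p * (cj (f q) * u q)) := by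
      intro q; simp only [hH]; ring
    rw [Finset.sum_congr rfl fun q _ => h1 q, Finset.sum_add_distrib]
    simp only [← Finset.mul_sum]
    rw [hUc, hDc']
    have haM : (a:ℂ) * (M:ℝ) = 1 := by
      norm_cast; rw [ha]; field_simp
    have hbM : (b:ℂ) * (M:ℝ) + (dR:ℝ) = 0 := by
      have hr : b * M + dR = 0 := by
        rw [hdR, hb, ha]; field_simp [hM.ne']; ring
      norm_cast
    simp only [hf, hw']
    linear_combination (ν * cj ν * w p) * haM + (w p) * hνν + (ν * u p) * hbM
  · -- Frobenius bound
    have hent : ∀ p q : N, ‖(Matrix.of fun p q => (ν / 2) * H p q) p q‖ ^ 2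
        = 1/4 * ‖H p q‖ ^ 2 := by
      intro p q
      rw [Matrix.of_apply, norm_mul, norm_div, hνn]
      rw [show ‖(2:ℂ)‖ = 2 from by norm_num]
      ring
    rw [frob_sq]
    simp only [hent]
    set T : ℝ := ∑ p : N, ∑ q : N, ‖H p q‖ ^ 2 with hT
    have hs2c : ∑ p, ∑ q, cj (H p q) * H p q
        = ((F * M + dR^2 + dR^2 + M * F : ℝ) : ℂ) := by
      calc ∑ p, ∑ q, cj (H p q) * H p q
          = (∑ p, cj (f p) * f p) * (∑ q, cj (u q) * u q)
            + (∑ p, cj (f p) * u p) * (∑ q, cj (f q) * u q)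
            + (∑ p, cj (u p) * f p) * (∑ q, cj (u q) * f q)
            + (∑ p, cj (u p) * u p) * (∑ q, cj (f q) * f q) := by
            rw [Finset.sum_mul_sum, Finset.sum_mul_sum, Finset.sum_mul_sum, Finset.sum_mul_sum]
            simp only [← Finset.sum_add_distrib]
            refine Finset.sum_congr rfl fun p _ => Finset.sum_congr rfl fun q _ => ?_
            simp only [hH, map_add, map_mul, hcj, Complex.conj_conj]; ring
        _ = _ := by rw [hFc, hUc, hDc, hDc']; push_cast; ring
    have hTc : ((T : ℝ) : ℂ) = ∑ p, ∑ q, cj (H p q) * H p q := by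
      rw [hT]
      rw [show ((∑ p, ∑ q, ‖H p q‖ ^ 2 : ℝ) : ℂ) = ∑ p, ∑ q, ((‖H p q‖ ^2 : ℝ) : ℂ) by
        push_cast; ring]
      exact Finset.sum_congr rfl fun p _ => Finset.sum_congr rfl fun q _ =>
        (conj_mul_self _).symm
    have hTval : T = F * M + dR^2 + dR^2 + M * F := by
      have := hTc.trans hs2c
      exact_mod_cast this
    have hsum : ∑ p : N, ∑ q : N, 1/4 * ‖H p q‖ ^ 2 = 1/4 * T := by
      rw [hT, Finset.mul_sum]
      exact Finset.sum_congr rfl fun p _ => (Finset.mul_sum _ _ _).symm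
    rw [hsum]
    have h1 : F = W/M^2 - (3/4)*cR^2/M^3 := by
      rw [hFdef, ha, hb]; field_simp [hM.ne']; ring
    have h2 : dR = cR/(2*M) := by
      rw [hdR, ha, hb]; field_simp [hM.ne']; ring
    have h3 : 1/4 * T = W/(2*M) - cR^2/(4*M^2) := by
      rw [hTval, h1, h2]; field_simp [hM.ne']; ring
    rw [h3]
    have h4 : 0 ≤ cR^2/(4*M^2) := by positivity
    linarith
lemma frob_conjT {α : Type*} [Fintype α] (A : Matrix α α ℂ) :
    frobNorm A.conjTranspose = frobNorm A := by
  unfold frobNorm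
  rw [Finset.sum_comm]
  congr 1; refine Finset.sum_congr rfl fun i _ => Finset.sum_congr rfl fun j _ => ?_
  rw [Matrix.conjTranspose_apply]
  rw [show star (A i j) = (starRingEnd ℂ) (A i j) from rfl, RCLike.norm_conj]

lemma frob_smul {α : Type*} [Fintype α] (c : ℂ) (A : Matrix α α ℂ) :
    frobNorm (c • A) = ‖c‖ * frobNorm A := by
  unfold frobNorm
  rw [show ∑ i, ∑ j, ‖(c • A) i j‖ ^ 2 = ‖c‖^2 * ∑ i, ∑ j, ‖A i j‖ ^2 by
    rw [Finset.mul_sum]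
    refine Finset.sum_congr rfl fun i _ => ?_
    rw [Finset.mul_sum]
    refine Finset.sum_congr rfl fun j _ => ?_
    rw [Matrix.smul_apply, smul_eq_mul, norm_mul]; ring]
  rw [Real.sqrt_mul (sq_nonneg _), Real.sqrt_sq (norm_nonneg _)]

lemma frob_eq_vnorm {α : Type*} [Fintype α] (A : Matrix α α ℂ) :
    frobNorm A = vnorm (fun p : α × α => A p.1 p.2) := by
  unfold frobNorm vnorm
  rw [Fintype.sum_prod_type]

lemma vnorm_add_le {α : Type*} [Fintype α] (g h : α → ℂ) :
    vnorm (g + h) ≤ vnorm g + vnorm h := by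
  rw [vnorm_eq_euclidean, vnorm_eq_euclidean, vnorm_eq_euclidean]
  exact norm_add_le ((WithLp.equiv 2 (α → ℂ)).symm g) ((WithLp.equiv 2 (α → ℂ)).symm h)

lemma frob_add_le {α : Type*} [Fintype α] (A B : Matrix α α ℂ) :
    frobNorm (A + B) ≤ frobNorm A + frobNorm B := by
  rw [frob_eq_vnorm, frob_eq_vnorm, frob_eq_vnorm]
  exact vnorm_add_le _ _

lemma frob_sum_le {α : Type*} [Fintype α] (s : Finset ℕ) (B : ℕ → Matrix α α ℂ) :
    frobNorm (∑ j ∈ s, B j) ≤ ∑ j ∈ s, frobNorm (B j) := by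
  classical
  induction s using Finset.induction with
  | empty => simp [frobNorm]
  | insert _ _ hj ih =>
      rw [Finset.sum_insert hj, Finset.sum_insert hj]
      exact (frob_add_le _ _).trans (by linarith)

set_option synthInstance.maxHeartbeats 1000000 in
lemma spec_smul {α : Type*} [Fintype α] [DecidableEq α] (c : ℂ) (A : Matrix α α ℂ) :
    specNorm (c • A) = ‖c‖ * specNorm A := by
  unfold specNorm
  rw [map_smul]
  exact norm_smul c (Matrix.toEuclideanCLM (𝕜 := ℂ) A)

lemma spec_add_le {α : Type*} [Fintype α] [DecidableEq α] (A B : Matrix α α ℂ) :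
    specNorm (A + B) ≤ specNorm A + specNorm B := by
  unfold specNorm
  rw [map_add]
  exact norm_add_le _ _

lemma add_le_sqrt2 (a b : ℝ) (ha : 0 ≤ a) (hb : 0 ≤ b) :
    a + b ≤ Real.sqrt 2 * Real.sqrt (a ^ 2 + b ^ 2) := by
  rw [← Real.sqrt_mul (by norm_num)]
  have h1 : (a + b) ^ 2 ≤ 2 * (a ^ 2 + b ^ 2) := by nlinarith [sq_nonneg (a - b)]
  calc a + b = Real.sqrt ((a + b) ^ 2) := (Real.sqrt_sq (by linarith)).symm
    _ ≤ _ := Real.sqrt_le_sqrt h1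

lemma elem_lower {N : Type*} [Fintype N]
    (Nf : Matrix N N ℂ → ℝ)
    (hnn : ∀ B, 0 ≤ Nf B)
    (hmv : ∀ (B : Matrix N N ℂ) (y : N → ℂ), vnorm (B.mulVec y) ≤ Nf B * vnorm y)
    (hadd : ∀ A B, Nf (A + B) ≤ Nf A + Nf B)
    (hsm : ∀ (c : ℂ) (B : Matrix N N ℂ), Nf (c • B) = ‖c‖ * Nf B)
    (lam : ℂ) (hlam : ‖lam‖ = 1) (ΔX ΔY : Matrix N N ℂ) (uu rr : N → ℂ)
    (hr : (lam • ΔX + ΔY).mulVec uu = rr) :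
    vnorm rr ≤ Real.sqrt 2 * Real.sqrt (Nf ΔX ^ 2 + Nf ΔY ^ 2) * vnorm uu := by
  have h1 : vnorm rr ≤ Nf (lam • ΔX + ΔY) * vnorm uu := by
    rw [← hr]; exact hmv _ _
  have h2 : Nf (lam • ΔX + ΔY) ≤ Nf ΔX + Nf ΔY := by
    have := hadd (lam • ΔX) ΔY
    rw [hsm lam ΔX, hlam, one_mul] at this
    exact this
  have h3 : Nf ΔX + Nf ΔY ≤ Real.sqrt 2 * Real.sqrt (Nf ΔX ^ 2 + Nf ΔY ^ 2) :=
    add_le_sqrt2 _ _ (hnn _) (hnn _)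
  calc vnorm rr ≤ Nf (lam • ΔX + ΔY) * vnorm uu := h1
    _ ≤ (Nf ΔX + Nf ΔY) * vnorm uu := mul_le_mul_of_nonneg_right h2 (vnorm_nonneg_s17 _)
    _ ≤ _ := mul_le_mul_of_nonneg_right h3 (vnorm_nonneg_s17 _)

lemma vKron_sumsq {m n : ℕ} (a : Fin m → ℂ) (b : Fin n → ℂ) :
    ∑ p, ‖vKron a b p‖ ^ 2 = (∑ i, ‖a i‖ ^ 2) * ∑ j, ‖b j‖ ^ 2 := by
  rw [Fintype.sum_prod_type, Finset.sum_mul_sum]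
  refine Finset.sum_congr rfl fun i _ => Finset.sum_congr rfl fun j _ => ?_
  rw [show vKron a b (i, j) = a i * b j from rfl, norm_mul]; ring

lemma colKron_mulVec {m n : ℕ} (a : Fin m → ℂ) (B : Matrix (Fin n) (Fin n) ℂ)
    (x : Fin n → ℂ) : (colKron a B).mulVec x = vKron a (B.mulVec x) := by
  funext p
  show ∑ j, a p.1 * B p.2 j * x j = a p.1 * ∑ j, B p.2 j * x j
  rw [Finset.mul_sum]
  exact Finset.sum_congr rfl fun j _ => by ring
lemma vnorm_neg' {α : Type*} [Fintype α] (g : α → ℂ) :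
    vnorm (fun i => -(g i)) = vnorm g := by
  unfold vnorm; simp

lemma sum_range_reflect' {M : Type*} [AddCommMonoid M] (g : ℕ → M) (m : ℕ) :
    ∑ j ∈ Finset.range (m + 1), g (m - j) = ∑ j ∈ Finset.range (m + 1), g j := by
  have := Finset.sum_range_reflect g (m + 1)
  simpa using this

lemma pow_conj_id (lam : ℂ) (h1 : (starRingEnd ℂ) lam * lam = 1) {j m : ℕ} (hj : j ≤ m) :
    ((starRingEnd ℂ) lam) ^ (m - j) = ((starRingEnd ℂ) lam) ^ m * lam ^ j := by
  have h2 : ((starRingEnd ℂ) lam) ^ (m - j) * (((starRingEnd ℂ) lam * lam) ^ j)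
      = ((starRingEnd ℂ) lam) ^ m * lam ^ j := by
    rw [mul_pow, ← mul_assoc, ← pow_add, Nat.sub_add_cancel hj]
  rw [h1, one_pow, mul_one] at h2; exact h2

lemma pow_id_conj (lam : ℂ) (h1 : (starRingEnd ℂ) lam * lam = 1) {j m : ℕ} (hj : j ≤ m) :
    lam ^ (m - j) = lam ^ m * ((starRingEnd ℂ) lam) ^ j := by
  have h2 : lam ^ (m - j) * ((lam * (starRingEnd ℂ) lam) ^ j)
      = lam ^ m * ((starRingEnd ℂ) lam) ^ j := by
    rw [mul_pow, ← mul_assoc, ← pow_add, Nat.sub_add_cancel hj]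
  rw [mul_comm lam _, h1, one_pow, mul_one] at h2; exact h2

lemma evalP_conjT {n : ℕ} (m : ℕ) (A : ℕ → Matrix (Fin n) (Fin n) ℂ)
    (hpal : ∀ j ≤ m, A (m - j) = (A j).conjTranspose) (lam : ℂ)
    (hcl : (starRingEnd ℂ) lam * lam = 1) :
    (evalP m A lam).conjTranspose = ((starRingEnd ℂ) lam) ^ m • evalP m A lam := by
  unfold evalP
  rw [Matrix.conjTranspose_sum]
  have step1 : ∀ j ∈ Finset.range (m + 1),
      (lam ^ j • A j).conjTranspose = ((starRingEnd ℂ) lam) ^ j • A (m - j) := by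
    intro j hj
    have hjm : j ≤ m := Nat.lt_succ_iff.mp (Finset.mem_range.mp hj)
    rw [Matrix.conjTranspose_smul, ← hpal j hjm]
    congr 1
    rw [star_pow]
    rfl
  rw [Finset.sum_congr rfl step1]
  have step2 : ∑ j ∈ Finset.range (m + 1), ((starRingEnd ℂ) lam) ^ j • A (m - j)
      = ∑ j ∈ Finset.range (m + 1), ((starRingEnd ℂ) lam) ^ (m - j) • A j := by
    rw [← sum_range_reflect' (fun j => ((starRingEnd ℂ) lam) ^ j • A (m - j)) m]
    refine Finset.sum_congr rfl fun j hj => ?_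
    rw [Nat.sub_sub_self (Nat.lt_succ_iff.mp (Finset.mem_range.mp hj))]
  rw [step2, Finset.smul_sum]
  refine Finset.sum_congr rfl fun j hj => ?_
  rw [pow_conj_id lam hcl (Nat.lt_succ_iff.mp (Finset.mem_range.mp hj)), smul_smul]

/-- backward-error comparison between an H-palindromic (`ε = 1`,
ansatz `Rv = conj v`) or H-anti-palindromic (`ε = −1`, ansatz `Rv = −conj v`)
linearization `L` of an H-palindromic polynomial `P`, for |λ| = 1. -/
theorem stmt_17 {m n : ℕ} (hm : 1 ≤ m) (hn : 0 < n)
    (A : ℕ → Matrix (Fin n) (Fin n) ℂ)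
    (hpal : ∀ j ≤ m, A (m - j) = (A j).conjTranspose)
    (hreg : ∃ z : ℂ, (evalP m A z).det ≠ 0)
    (ε : ℂ) (hε : ε = 1 ∨ ε = -1)
    (v : Fin m → ℂ) (hv1 : vnorm v = 1)
    (hvR : ∀ i : Fin m, v i.rev = ε * (starRingEnd ℂ) (v i))
    (X Y : Matrix (Fin m × Fin n) (Fin m × Fin n) ℂ) (hXY : X = ε • Y.conjTranspose)
    (hL : ∀ z : ℂ, (z • X + Y) * colKron (Lam1 m z) (1 : Matrix (Fin n) (Fin n) ℂ)
        = colKron v (evalP m A z))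
    (lam : ℂ) (hlam : ‖lam‖ = 1)
    (x : Fin n → ℂ) (hx : vnorm x = 1)
    (hnz : (evalP m A lam).mulVec x ≠ 0) :
    (Real.sqrt (((m : ℝ) + 1) / (2 * m)) ≤
        etaPencilF_Heps ε X Y lam (vKron (Lam1 m lam) x) /
          (vnorm ((evalP m A lam).mulVec x) / Real.sqrt (LamNormSq m lam)) ∧
      etaPencilF_Heps ε X Y lam (vKron (Lam1 m lam) x) /
          (vnorm ((evalP m A lam).mulVec x) / Real.sqrt (LamNormSq m lam)) ≤
        Real.sqrt 2) ∧
    etaPencilF_Heps ε X Y lam (vKron (Lam1 m lam) x) / etaF_Hpal m A lam x ≤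
      Real.sqrt 2 ∧
    (Real.sqrt (((m : ℝ) + 1) / (2 * m)) ≤
        etaPencil2_Heps ε X Y lam (vKron (Lam1 m lam) x) /
          (vnorm ((evalP m A lam).mulVec x) / Real.sqrt (LamNormSq m lam)) ∧
      etaPencil2_Heps ε X Y lam (vKron (Lam1 m lam) x) /
          (vnorm ((evalP m A lam).mulVec x) / Real.sqrt (LamNormSq m lam)) ≤
        Real.sqrt 2) := by
  classical
  have hm0 : (0:ℝ) < m := by exact_mod_cast hm
  set cj := starRingEnd ℂ with hcj
  have hcl : cj lam * lam = 1 := by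
    rw [hcj, conj_mul_self, hlam]; norm_num
  have hε2 : ε * ε = 1 := by rcases hε with h | h <;> simp [h]
  have hεn : ‖ε‖ = 1 := by rcases hε with h | h <;> simp [h]
  set k : Fin n → ℂ := (evalP m A lam).mulVec x with hk
  set u : Fin m × Fin n → ℂ := vKron (Lam1 m lam) x with hudef
  set r : Fin m × Fin n → ℂ := vKron v k with hrdef
  -- basic norms
  have hsumx : ∑ j, ‖x j‖ ^ 2 = 1 := by rw [← vnorm_sq, hx]; norm_num
  have hsumv : ∑ i, ‖v i‖ ^ 2 = 1 := by rw [← vnorm_sq, hv1]; norm_num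
  have hsumLam : ∑ i, ‖Lam1 m lam i‖ ^ 2 = (m:ℝ) := by
    have h1 : ∀ i : Fin m, ‖Lam1 m lam i‖ ^ 2 = 1 := fun i => by
      rw [show Lam1 m lam i = lam ^ (m - 1 - (i:ℕ)) from rfl, norm_pow, hlam]; norm_num
    rw [Finset.sum_congr rfl fun i _ => h1 i]
    simp
  have hsumU : ∑ p, ‖u p‖ ^ 2 = (m:ℝ) := by
    rw [hudef, vKron_sumsq, hsumLam, hsumx, mul_one]
  have hvnu : vnorm u = Real.sqrt m := by unfold vnorm; rw [hsumU]
  set K := vnorm k with hKdef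
  have hK0 : 0 < K := by
    rcases (vnorm_nonneg_s17 k).lt_or_eq with h | h
    · exact h
    · exfalso
      apply hnz
      have h0 : ∑ j, ‖k j‖ ^ 2 = 0 := by
        have := vnorm_sq k
        rw [← h] at this
        simpa using this.symm
      funext j
      have := (Finset.sum_eq_zero_iff_of_nonneg (fun i _ => sq_nonneg ‖k i‖)).mp h0 j
        (Finset.mem_univ j)
      have : ‖k j‖ = 0 := by nlinarith [norm_nonneg (k j)]
      simpa using this
  have hsumk : ∑ j, ‖k j‖ ^ 2 = K ^ 2 := (vnorm_sq k).symm
  have hsumr : ∑ p, ‖r p‖ ^ 2 = K ^ 2 := by rw [hrdef, vKron_sumsq, hsumv, one_mul, hsumk]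
  have hvr : vnorm r = K := by
    unfold vnorm; rw [hsumr]; exact Real.sqrt_sq hK0.le
  have hLam : Real.sqrt (LamNormSq m lam) = Real.sqrt ((m:ℝ) + 1) := by
    unfold LamNormSq
    have h1 : ∀ j ∈ Finset.range (m + 1), ‖lam‖ ^ (2 * j) = 1 := fun j _ => by
      rw [hlam, one_pow]
    rw [Finset.sum_congr rfl h1, Finset.sum_const, Finset.card_range]
    congr 1
    push_cast
    ring
  -- linearization identity
  have hLu : (lam • X + Y).mulVec u = r := by
    have h1 : ((lam • X + Y) * colKron (Lam1 m lam) (1 : Matrix (Fin n) (Fin n) ℂ)).mulVec x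
        = (colKron v (evalP m A lam)).mulVec x := by rw [hL lam]
    rw [← Matrix.mulVec_mulVec, colKron_mulVec, colKron_mulVec, Matrix.one_mulVec] at h1
    exact h1
  -- compatibility
  set S : ℂ := ∑ i, cj (Lam1 m lam i) * v i with hSdef
  set T : ℂ := ∑ j, cj (x j) * k j with hTdef
  have hc0r : ∑ p, cj (u p) * r p = S * T := by
    rw [hudef, hrdef, Fintype.sum_prod_type, hSdef, hTdef, Finset.sum_mul_sum]
    refine Finset.sum_congr rfl fun i _ => Finset.sum_congr rfl fun j _ => ?_
    rw [show vKron (Lam1 m lam) x (i, j) = Lam1 m lam i * x j from rfl,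
      show vKron v k (i, j) = v i * k j from rfl, map_mul]
    ring
  have hS : cj S = ε * lam ^ (m - 1) * S := by
    have hterm : ∀ i : Fin m, cj (cj (Lam1 m lam i) * v i)
        = ε * (lam ^ ((Fin.rev i : ℕ)) * v (Fin.rev i)) := by
      intro i
      rw [map_mul, Complex.conj_conj]
      have hcv : cj (v i) = ε * v (Fin.rev i) := by
        rw [hvR i, ← mul_assoc, hε2, one_mul]
      rw [hcv, show Lam1 m lam i = lam ^ (m - 1 - (i:ℕ)) from rfl, Fin.val_rev]
      have : (i : ℕ) + 1 ≤ m := i.isLt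
      rw [show m - 1 - (i:ℕ) = m - ((i:ℕ) + 1) by omega]
      ring
    have h1 : cj S = ε * ∑ i : Fin m, lam ^ ((i : ℕ)) * v i := by
      rw [hSdef, map_sum, Finset.sum_congr rfl fun i _ => hterm i, ← Finset.mul_sum]
      congr 1
      exact (Fintype.sum_bijective Fin.rev Fin.rev_bijective
        (fun i : Fin m => lam ^ ((Fin.rev i : ℕ)) * v (Fin.rev i))
        (fun i : Fin m => lam ^ ((i : ℕ)) * v i) (fun i => rfl))
    rw [h1, hSdef, Finset.mul_sum, Finset.mul_sum]
    refine Finset.sum_congr rfl fun i _ => ?_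
    have hile : (i : ℕ) ≤ m - 1 := by omega
    have e1 : (i:ℕ) + ((m-1) - (i:ℕ)) = m - 1 := by omega
    have hpow : lam ^ (m - 1) * (cj lam) ^ ((m-1) - (i:ℕ)) = lam ^ (i:ℕ) := by
      have hp1 : lam ^ ((i:ℕ)) * lam ^ ((m-1) - (i:ℕ)) = lam ^ (m-1) := by
        rw [← pow_add, e1]
      have hp2 : lam ^ ((m-1) - (i:ℕ)) * (cj lam) ^ ((m-1) - (i:ℕ)) = 1 := by
        rw [← mul_pow, show lam * cj lam = 1 from by rw [mul_comm]; exact hcl, one_pow]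
      calc lam ^ (m-1) * (cj lam) ^ ((m-1) - (i:ℕ))
          = (lam ^ ((i:ℕ)) * lam ^ ((m-1) - (i:ℕ))) * (cj lam) ^ ((m-1) - (i:ℕ)) := by
            rw [hp1]
        _ = lam ^ (i:ℕ) * (lam ^ ((m-1) - (i:ℕ)) * (cj lam) ^ ((m-1) - (i:ℕ))) := by ring
        _ = lam ^ (i:ℕ) := by rw [hp2, mul_one]
    rw [show Lam1 m lam i = lam ^ (m - 1 - (i:ℕ)) from rfl, map_pow]
    rw [show m - 1 - (i:ℕ) = (m-1) - (i:ℕ) from rfl]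
    linear_combination (-(ε * v i)) * hpow
  have hT : cj T = (cj lam) ^ m * T := by
    have hPc := evalP_conjT m A hpal lam hcl
    rw [hTdef, map_sum]
    have h1 : ∀ j, cj (cj (x j) * k j) = x j * ∑ l, cj ((evalP m A lam) j l) * cj (x l) := by
      intro j
      rw [map_mul, Complex.conj_conj, hk]
      congr 1
      rw [show (evalP m A lam).mulVec x j = ∑ l, (evalP m A lam) j l * x l from rfl, map_sum]
      exact Finset.sum_congr rfl fun l _ => by rw [map_mul]
    rw [Finset.sum_congr rfl fun j _ => h1 j]
    have h2 : ∀ j l, cj ((evalP m A lam) j l) = (cj lam) ^ m * (evalP m A lam) l j := by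
      intro j l
      have := congrFun (congrFun hPc l) j
      rw [Matrix.conjTranspose_apply, Matrix.smul_apply, smul_eq_mul] at this
      exact this
    calc ∑ j, x j * ∑ l, cj ((evalP m A lam) j l) * cj (x l)
        = ∑ j, ∑ l, (cj lam) ^ m * (cj (x l) * ((evalP m A lam) l j * x j)) := by
          refine Finset.sum_congr rfl fun j _ => ?_
          rw [Finset.mul_sum]
          refine Finset.sum_congr rfl fun l _ => ?_
          rw [h2 j l]; ring
      _ = (cj lam) ^ m * ∑ l, cj (x l) * ∑ j, (evalP m A lam) l j * x j := by
          rw [Finset.sum_comm, Finset.mul_sum]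
          refine Finset.sum_congr rfl fun l _ => ?_
          rw [Finset.mul_sum, Finset.mul_sum]
      _ = (cj lam) ^ m * T := by
          rw [hTdef]
          rfl
  set μ : ℂ := lam * ε with hμdef
  have hμn : ‖μ‖ = 1 := by rw [hμdef, norm_mul, hlam, hεn, mul_one]
  have hεc : cj ε = ε := by rcases hε with h | h <;> simp [h, hcj]
  have hST : S * T = μ * cj (S * T) := by
    rw [map_mul, hS, hT, hμdef]
    have hm1 : lam * lam ^ (m - 1) = lam ^ m := by
      rw [← pow_succ']
      congr 1
      omega
    have hlm : lam ^ m * (cj lam) ^ m = 1 := by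
      rw [← mul_pow, mul_comm lam _, hcl, one_pow]
    calc S * T = (lam ^ m * (cj lam) ^ m) * (ε * ε) * (S * T) := by
          rw [hlm, hε2]; ring
      _ = lam * ε * (ε * lam ^ (m - 1) * S * ((cj lam) ^ m * T)) := by
          rw [← hm1]; ring
  have hcomp : (∑ p, cj (u p) * (-(r p))) = μ * cj (∑ p, cj (u p) * (-(r p))) := by
    have h1 : (∑ p, cj (u p) * (-(r p))) = -(S * T) := by
      rw [← hc0r, ← Finset.sum_neg_distrib]
      exact Finset.sum_congr rfl fun p _ => by ring
    rw [h1, map_neg, mul_neg, ← hST]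
  -- construction
  obtain ⟨ΔY₀, hmv0, hn0⟩ := construct μ hμn u (fun p => -(r p)) m hm0 hsumU hcomp
  have hsumw : (∑ p, ‖-(r p)‖ ^ 2) = K ^ 2 := by
    rw [← hsumr]; exact Finset.sum_congr rfl fun p _ => by rw [norm_neg]
  rw [hsumw] at hn0
  set ΔX₀ : Matrix (Fin m × Fin n) (Fin m × Fin n) ℂ := ε • ΔY₀.conjTranspose with hX0
  have hkill : (lam • X + Y + lam • ΔX₀ + ΔY₀).mulVec u = 0 := by
    have h1 : lam • ΔX₀ = μ • ΔY₀.conjTranspose := by rw [hX0, smul_smul, hμdef]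
    have h2 : lam • X + Y + lam • ΔX₀ + ΔY₀ = (lam • X + Y) + (μ • ΔY₀.conjTranspose + ΔY₀) := by
      rw [h1]; abel
    rw [h2, Matrix.add_mulVec, hLu, hmv0]
    funext p
    simp
  have hfX0 : frobNorm ΔX₀ = frobNorm ΔY₀ := by
    rw [hX0, frob_smul, hεn, one_mul, frob_conjT]
  have hm2 : K ^ 2 / (2 * ↑m) + K ^ 2 / (2 * ↑m) = K^2 / m := by field_simp; ring
  have hsqKm : Real.sqrt (K ^ 2 / (m:ℝ)) = K / Real.sqrt m := by
    rw [Real.sqrt_div (sq_nonneg K), Real.sqrt_sq hK0.le]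
  have he0 : Real.sqrt (frobNorm ΔX₀ ^ 2 + frobNorm ΔY₀ ^ 2) ≤ K / Real.sqrt m := by
    rw [hfX0, ← hsqKm]
    apply Real.sqrt_le_sqrt
    linarith
  have he2 : Real.sqrt (specNorm ΔX₀ ^ 2 + specNorm ΔY₀ ^ 2) ≤ K / Real.sqrt m := by
    refine le_trans ?_ he0
    apply Real.sqrt_le_sqrt
    have h1 : specNorm ΔX₀ ^ 2 ≤ frobNorm ΔX₀ ^ 2 :=
      pow_le_pow_left₀ (spec_nonneg _) (spec_le_frob _) 2
    have h2 : specNorm ΔY₀ ^ 2 ≤ frobNorm ΔY₀ ^ 2 :=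
      pow_le_pow_left₀ (spec_nonneg _) (spec_le_frob _) 2
    linarith
  -- per-element lower bounds
  have hsplit : ∀ ΔX ΔY : Matrix (Fin m × Fin n) (Fin m × Fin n) ℂ,
      (lam • X + Y + lam • ΔX + ΔY).mulVec u = 0 →
      (lam • ΔX + ΔY).mulVec u = fun p => -(r p) := by
    intro ΔX ΔY h
    have h2 : lam • X + Y + lam • ΔX + ΔY = (lam • X + Y) + (lam • ΔX + ΔY) := by abel
    rw [h2, Matrix.add_mulVec, hLu] at h
    funext p
    have := congrFun h p
    simp only [Pi.add_apply, Pi.zero_apply] at this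
    linear_combination this
  have hsqrt2m : Real.sqrt 2 * Real.sqrt m = Real.sqrt (2 * m) := (Real.sqrt_mul (by norm_num) m).symm
  have h2m0 : (0:ℝ) < Real.sqrt (2 * m) := Real.sqrt_pos.mpr (by linarith)
  have hlb_generic : ∀ (Nf : Matrix (Fin m × Fin n) (Fin m × Fin n) ℂ → ℝ),
      (∀ B, 0 ≤ Nf B) →
      (∀ B y, vnorm (B.mulVec y) ≤ Nf B * vnorm y) →
      (∀ B C, Nf (B + C) ≤ Nf B + Nf C) →
      (∀ (c : ℂ) B, Nf (c • B) = ‖c‖ * Nf B) →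
      ∀ ΔX ΔY : Matrix (Fin m × Fin n) (Fin m × Fin n) ℂ,
      (lam • X + Y + lam • ΔX + ΔY).mulVec u = 0 →
      K / Real.sqrt (2 * m) ≤ Real.sqrt (Nf ΔX ^ 2 + Nf ΔY ^ 2) := by
    intro Nf hnn hmv hadd hsm ΔX ΔY h
    have h1 := elem_lower Nf hnn hmv hadd hsm lam hlam ΔX ΔY u (fun p => -(r p))
      (hsplit ΔX ΔY h)
    have h2 : vnorm (fun p => -(r p)) = K := by rw [vnorm_neg']; exact hvr
    rw [h2, hvnu] at h1
    rw [div_le_iff₀ h2m0]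
    calc K ≤ Real.sqrt 2 * Real.sqrt (Nf ΔX ^ 2 + Nf ΔY ^ 2) * Real.sqrt m := h1
      _ = Real.sqrt (Nf ΔX ^ 2 + Nf ΔY ^ 2) * (Real.sqrt 2 * Real.sqrt m) := by ring
      _ = _ := by rw [hsqrt2m]
  -- assemble
  set SF := {e : ℝ | ∃ ΔX ΔY : Matrix (Fin m × Fin n) (Fin m × Fin n) ℂ,
    ΔX = ε • ΔY.conjTranspose ∧ (lam • X + Y + lam • ΔX + ΔY).mulVec u = 0 ∧
    e = Real.sqrt (frobNorm ΔX ^ 2 + frobNorm ΔY ^ 2)} with hSF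
  have hηF : etaPencilF_Heps ε X Y lam u = sInf SF := rfl
  have memF : Real.sqrt (frobNorm ΔX₀ ^ 2 + frobNorm ΔY₀ ^ 2) ∈ SF := ⟨ΔX₀, ΔY₀, hX0, hkill, rfl⟩
  have lbF : ∀ e ∈ SF, K / Real.sqrt (2 * m) ≤ e := by
    rintro e ⟨ΔX, ΔY, -, hk0, rfl⟩
    exact hlb_generic frobNorm frob_nonneg mulVec_vnorm_le_frob frob_add_le frob_smul ΔX ΔY hk0
  have hlbηF : K / Real.sqrt (2 * m) ≤ etaPencilF_Heps ε X Y lam u := by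
    rw [hηF]; exact le_csInf ⟨_, memF⟩ lbF
  have hubηF : etaPencilF_Heps ε X Y lam u ≤ K / Real.sqrt m := by
    rw [hηF]; exact le_trans (csInf_le ⟨K / Real.sqrt (2*m), lbF⟩ memF) he0
  set S2 := {e : ℝ | ∃ ΔX ΔY : Matrix (Fin m × Fin n) (Fin m × Fin n) ℂ,
    ΔX = ε • ΔY.conjTranspose ∧ (lam • X + Y + lam • ΔX + ΔY).mulVec u = 0 ∧
    e = Real.sqrt (specNorm ΔX ^ 2 + specNorm ΔY ^ 2)} with hS2
  have hη2 : etaPencil2_Heps ε X Y lam u = sInf S2 := rfl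
  have mem2 : Real.sqrt (specNorm ΔX₀ ^ 2 + specNorm ΔY₀ ^ 2) ∈ S2 := ⟨ΔX₀, ΔY₀, hX0, hkill, rfl⟩
  have lb2 : ∀ e ∈ S2, K / Real.sqrt (2 * m) ≤ e := by
    rintro e ⟨ΔX, ΔY, -, hk0, rfl⟩
    exact hlb_generic specNorm spec_nonneg mulVec_vnorm_le_spec spec_add_le spec_smul ΔX ΔY hk0
  have hlbη2 : K / Real.sqrt (2 * m) ≤ etaPencil2_Heps ε X Y lam u := by
    rw [hη2]; exact le_csInf ⟨_, mem2⟩ lb2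
  have hubη2 : etaPencil2_Heps ε X Y lam u ≤ K / Real.sqrt m := by
    rw [hη2]; exact le_trans (csInf_le ⟨K / Real.sqrt (2*m), lb2⟩ mem2) he2
  rw [hLam]
  set D := K / Real.sqrt ((m:ℝ) + 1) with hD
  have hsm1 : (0:ℝ) < Real.sqrt ((m:ℝ) + 1) := Real.sqrt_pos.mpr (by linarith)
  have hsm : (0:ℝ) < Real.sqrt (m:ℝ) := Real.sqrt_pos.mpr hm0
  have hD0 : 0 < D := div_pos hK0 hsm1
  have key1 : Real.sqrt (((m:ℝ) + 1) / (2 * m)) * D = K / Real.sqrt (2 * m) := by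
    rw [hD, Real.sqrt_div (by linarith : (0:ℝ) ≤ (m:ℝ) + 1)]
    field_simp
  have key2 : K / Real.sqrt m ≤ Real.sqrt 2 * D := by
    have hs : Real.sqrt ((m:ℝ) + 1) ≤ Real.sqrt 2 * Real.sqrt m := by
      rw [hsqrt2m]
      have hm1' : (1:ℝ) ≤ (m:ℝ) := by exact_mod_cast hm
      exact Real.sqrt_le_sqrt (by linarith)
    rw [div_le_iff₀ hsm, hD]
    rw [show Real.sqrt 2 * (K / Real.sqrt ((m:ℝ) + 1)) * Real.sqrt m
        = K * (Real.sqrt 2 * Real.sqrt m) / Real.sqrt ((m:ℝ) + 1) from by ring]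
    rw [le_div_iff₀ hsm1]
    exact mul_le_mul_of_nonneg_left hs hK0.le
  refine ⟨⟨?_, ?_⟩, ?_, ⟨?_, ?_⟩⟩
  · rw [le_div_iff₀ hD0, key1]
    exact hlbηF
  · rw [div_le_iff₀ hD0]
    exact le_trans hubηF key2
  · -- polynomial comparison
    set SP := { e : ℝ | ∃ Δ : ℕ → Matrix (Fin n) (Fin n) ℂ,
      (∀ j ≤ m, Δ (m - j) = (Δ j).conjTranspose) ∧
      (evalP m A lam).mulVec x + (evalP m Δ lam).mulVec x = 0 ∧
      e = Real.sqrt (∑ j ∈ Finset.range (m + 1), frobNorm (Δ j) ^ 2) } with hSP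
    have hηP : etaF_Hpal m A lam x = sInf SP := rfl
    have lbP : ∀ e ∈ SP, D ≤ e := by
      rintro e ⟨Δ, -, hkp, rfl⟩
      have h1 : (evalP m Δ lam).mulVec x = fun j => -(k j) := by
        funext j
        have h := congrFun hkp j
        simp only [Pi.add_apply, Pi.zero_apply] at h
        linear_combination h
      have h2 : vnorm ((evalP m Δ lam).mulVec x) = K := by rw [h1, vnorm_neg']
      have h3 := mulVec_vnorm_le_frob (evalP m Δ lam) x
      rw [h2, hx, mul_one] at h3
      have h4 : frobNorm (evalP m Δ lam) ≤ ∑ j ∈ Finset.range (m+1), frobNorm (Δ j) := by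
        refine le_trans (by unfold evalP; exact frob_sum_le _ _) ?_
        refine Finset.sum_le_sum fun j _ => ?_
        rw [frob_smul, norm_pow, hlam, one_pow, one_mul]
      have hnn : 0 ≤ ∑ j ∈ Finset.range (m+1), frobNorm (Δ j) :=
        Finset.sum_nonneg fun j _ => frob_nonneg _
      have h5 : (∑ j ∈ Finset.range (m+1), frobNorm (Δ j))
          ≤ Real.sqrt ((m:ℝ) + 1)
            * Real.sqrt (∑ j ∈ Finset.range (m+1), frobNorm (Δ j) ^ 2) := by
        have hcs := Finset.sum_mul_sq_le_sq_mul_sq (Finset.range (m+1)) (fun _ => 1)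
          (fun j => frobNorm (Δ j))
        simp only [one_mul, one_pow] at hcs
        rw [Finset.sum_const, Finset.card_range, nsmul_eq_mul, mul_one] at hcs
        calc (∑ j ∈ Finset.range (m+1), frobNorm (Δ j))
            = Real.sqrt ((∑ j ∈ Finset.range (m+1), frobNorm (Δ j)) ^ 2) :=
              (Real.sqrt_sq hnn).symm
          _ ≤ Real.sqrt (((m:ℝ)+1) * ∑ j ∈ Finset.range (m+1), frobNorm (Δ j) ^ 2) := by
              apply Real.sqrt_le_sqrt
              calc (∑ j ∈ Finset.range (m+1), frobNorm (Δ j)) ^ 2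
                  ≤ (↑(m+1) : ℝ) * ∑ j ∈ Finset.range (m+1), frobNorm (Δ j) ^ 2 := hcs
                _ = ((m:ℝ)+1) * ∑ j ∈ Finset.range (m+1), frobNorm (Δ j) ^ 2 := by push_cast; ring
          _ = _ := Real.sqrt_mul (by positivity) _
      rw [hD, div_le_iff₀ hsm1]
      calc K ≤ frobNorm (evalP m Δ lam) := h3
        _ ≤ ∑ j ∈ Finset.range (m+1), frobNorm (Δ j) := h4
        _ ≤ Real.sqrt ((m:ℝ) + 1)
            * Real.sqrt (∑ j ∈ Finset.range (m+1), frobNorm (Δ j) ^ 2) := h5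
        _ = Real.sqrt (∑ j ∈ Finset.range (m+1), frobNorm (Δ j) ^ 2)
            * Real.sqrt ((m:ℝ) + 1) := by ring
    by_cases hne : SP.Nonempty
    · have hP0 : D ≤ etaF_Hpal m A lam x := by rw [hηP]; exact le_csInf hne lbP
      have hPpos : 0 < etaF_Hpal m A lam x := lt_of_lt_of_le hD0 hP0
      rw [div_le_iff₀ hPpos]
      calc etaPencilF_Heps ε X Y lam u ≤ K / Real.sqrt m := hubηF
        _ ≤ Real.sqrt 2 * D := key2
        _ ≤ Real.sqrt 2 * etaF_Hpal m A lam x :=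
            mul_le_mul_of_nonneg_left hP0 (Real.sqrt_nonneg 2)
    · have hempty : SP = ∅ := Set.not_nonempty_iff_eq_empty.mp hne
      rw [hηP, hempty, Real.sInf_empty, div_zero]
      exact Real.sqrt_nonneg 2
  · rw [le_div_iff₀ hD0, key1]
    exact hlbη2
  · rw [div_le_iff₀ hD0]
    exact le_trans hubη2 key2
end
end

section
/- Let m be an odd positive integer, λ ∈ ℂ, c ∈ ℂ, and ε ∈ {1, −1}; assume λ ≠ −1 if ε = 1 and λ ≠ 1 if ε = −1. Set N := ‖Π₊(Λ_m)‖₂² if ε = 1 and N := ‖Π₋(Λ_m)‖₂² if ε = −1 (then N > 0). Define a_j := (conj(λ)^j + ε·conj(λ)^{m−j}) c / (2N) for j = 0, …, m. Then: a_{m−j} = ε a_j for all j; Σ_{j=0}^m a_j λ^j = c; Σ_{j=0}^m |a_j|² = |c|²/N; and every b = (b_0, …, b_m) ∈ ℂ^{m+1} with b_{m−j} = ε b_j for all j and Σ_{j=0}^m b_j λ^j = c satisfies Σ_{j=0}^m |b_j|² ≥ |c|²/N. -/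
noncomputable section

/-- minimum-norm solution of `∑_{j=0}^m a_j λ^j = c` subject to the
symmetry `a_{m−j} = ε a_j`, for m odd. -/
theorem stmt_18 (m : ℕ) (hm : Odd m) (lam c ε : ℂ) (hε : ε = 1 ∨ ε = -1)
    (hlam1 : ε = 1 → lam ≠ -1) (hlam2 : ε = -1 → lam ≠ 1)
    (N : ℝ) (hN : N = if ε = 1 then PiPlusSq m lam else PiMinusSq m lam)
    (a : ℕ → ℂ)
    (ha : ∀ j ≤ m, a j =
      ((starRingEnd ℂ lam) ^ j + ε * (starRingEnd ℂ lam) ^ (m - j)) * c / (2 * (N : ℂ))) :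
    0 < N ∧
    (∀ j ≤ m, a (m - j) = ε * a j) ∧
    (∑ j ∈ Finset.range (m + 1), a j * lam ^ j = c) ∧
    (∑ j ∈ Finset.range (m + 1), ‖a j‖ ^ 2 = ‖c‖ ^ 2 / N) ∧
    (∀ b : ℕ → ℂ, (∀ j ≤ m, b (m - j) = ε * b j) →
      (∑ j ∈ Finset.range (m + 1), b j * lam ^ j = c) →
      ‖c‖ ^ 2 / N ≤ ∑ j ∈ Finset.range (m + 1), ‖b j‖ ^ 2) := by
  obtain ⟨K, hK⟩ := hm
  have hm1 : 1 ≤ m := by omega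
  set w : ℕ → ℂ := fun j => lam ^ j + ε * lam ^ (m - j) with hwdef
  have hε2 : ε * ε = 1 := by rcases hε with h | h <;> rw [h] <;> ring
  have hεc : (starRingEnd ℂ) ε = ε := by rcases hε with h | h <;> simp [h]
  have hεn : ‖ε‖ = 1 := by rcases hε with h | h <;> simp [h]
  have hwsym : ∀ j ≤ m, w (m - j) = ε * w j := by
    intro j hj
    simp only [hwdef]
    rw [Nat.sub_sub_self hj]
    linear_combination (- lam ^ (m - j)) * hε2
  have hreflect : ∀ f : ℕ → ℂ, ∑ j ∈ Finset.range (m + 1), f (m - j)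
      = ∑ j ∈ Finset.range (m + 1), f j := by
    intro f
    simpa using Finset.sum_range_reflect f (m + 1)
  have hNhalf : N = ∑ j ∈ Finset.range (K + 1), ‖w j‖ ^ 2 / 2 := by
    have hmod : m % 2 = 1 := by omega
    have hdiv : (m + 1) / 2 = K + 1 := by omega
    rcases hε with h | h
    · rw [hN, if_pos h, PiPlusSq, if_pos hmod, hdiv]
      refine Finset.sum_congr rfl fun j _ => ?_
      simp only [hwdef, h, one_mul]
    · have h1 : ε ≠ 1 := by rw [h]; intro hc; norm_num at hc
      rw [hN, if_neg h1, PiMinusSq, if_pos hmod, hdiv]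
      refine Finset.sum_congr rfl fun j _ => ?_
      have : lam ^ j - lam ^ (m - j) = w j := by simp only [hwdef, h]; ring
      rw [this]
  have h4N : 4 * N = ∑ j ∈ Finset.range (m + 1), ‖w j‖ ^ 2 := by
    have hsplit : ∑ j ∈ Finset.range (m + 1), ‖w j‖ ^ 2
        = (∑ j ∈ Finset.range (K + 1), ‖w j‖ ^ 2)
          + ∑ i ∈ Finset.range (K + 1), ‖w ((K + 1) + i)‖ ^ 2 := by
      rw [show m + 1 = (K + 1) + (K + 1) by omega, Finset.sum_range_add]
    have hsecond : ∑ i ∈ Finset.range (K + 1), ‖w ((K + 1) + i)‖ ^ 2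
        = ∑ i ∈ Finset.range (K + 1), ‖w i‖ ^ 2 := by
      rw [← Finset.sum_range_reflect (fun i => ‖w ((K + 1) + i)‖ ^ 2) (K + 1)]
      refine Finset.sum_congr rfl fun i hi => ?_
      have hi' : i < K + 1 := Finset.mem_range.mp hi
      have he : (K + 1) + (K + 1 - 1 - i) = m - i := by omega
      simp only [he]
      rw [hwsym i (by omega), norm_mul, hεn, one_mul]
    rw [hsplit, hsecond, hNhalf, ← Finset.sum_div]
    ring
  have hsum_nonneg : (0 : ℝ) ≤ ∑ j ∈ Finset.range (m + 1), ‖w j‖ ^ 2 :=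
    Finset.sum_nonneg fun j _ => sq_nonneg _
  have hNpos : 0 < N := by
    rcases eq_or_lt_of_le (by linarith : (0 : ℝ) ≤ N) with h | h
    · exfalso
      have hzero : ∀ j ∈ Finset.range (m + 1), ‖w j‖ ^ 2 = 0 :=
        (Finset.sum_eq_zero_iff_of_nonneg (fun j _ => sq_nonneg ‖w j‖)).mp
          (by rw [← h4N, ← h]; ring)
      have hwz : ∀ j, j < m + 1 → w j = 0 := by
        intro j hj
        have h1 := hzero j (Finset.mem_range.mpr hj)
        exact norm_eq_zero.mp ((pow_eq_zero_iff (n := 2) (by norm_num)).mp h1)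
      have hw0 : w 0 = 0 := hwz 0 (by omega)
      have hw1 : w 1 = 0 := hwz 1 (by omega)
      have h0 : 1 + ε * lam ^ m = 0 := by simpa [hwdef] using hw0
      have h1 : lam + ε * lam ^ (m - 1) = 0 := by simpa [hwdef] using hw1
      have hm' : lam ^ m = lam * lam ^ (m - 1) := by
        conv_lhs => rw [show m = (m - 1) + 1 by omega]
        rw [pow_succ]
        ring
      have hsq : lam ^ 2 = 1 := by linear_combination lam * h1 - h0 + ε * hm'
      have hfac : (lam - 1) * (lam + 1) = 0 := by linear_combination hsq
      rcases mul_eq_zero.mp hfac with hl | hl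
      · have hl1 : lam = 1 := by linear_combination hl
        have hε' : ε = -1 := by
          rw [hl1] at h0
          simp at h0
          linear_combination h0
        exact hlam2 hε' hl1
      · have hl1 : lam = -1 := by linear_combination hl
        have hmo : lam ^ m = -1 := by rw [hl1]; exact Odd.neg_one_pow ⟨K, hK⟩
        have hε' : ε = 1 := by
          rw [hmo] at h0
          linear_combination - h0
        exact hlam1 hε' hl1
    · exact h
  have hNne : (N : ℂ) ≠ 0 := by exact_mod_cast hNpos.ne'
  have h2Nne : (2 * (N : ℂ)) ≠ 0 := by simp [hNne]
  have hconjw : ∀ j, (starRingEnd ℂ lam) ^ j + ε * (starRingEnd ℂ lam) ^ (m - j)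
      = starRingEnd ℂ (w j) := by
    intro j
    simp only [hwdef, map_add, map_mul, map_pow, hεc]
  set T : ℂ := ∑ j ∈ Finset.range (m + 1), starRingEnd ℂ (w j) * lam ^ j with hTdef
  have hcm : ∀ z : ℂ, starRingEnd ℂ z * z = ((‖z‖ ^ 2 : ℝ) : ℂ) := by
    intro z
    rw [mul_comm]
    exact_mod_cast RCLike.mul_conj z
  have e1 : ((4 * N : ℝ) : ℂ) = ∑ j ∈ Finset.range (m + 1), starRingEnd ℂ (w j) * w j := by
    rw [h4N]
    push_cast
    exact Finset.sum_congr rfl fun j _ => by rw [hcm]; push_cast; ring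
  have e3 : ∑ j ∈ Finset.range (m + 1), starRingEnd ℂ (w j) * lam ^ (m - j) = ε * T := by
    have := hreflect (fun j => starRingEnd ℂ (w j) * lam ^ (m - j))
    rw [← this, hTdef, Finset.mul_sum]
    refine Finset.sum_congr rfl fun j hj => ?_
    have hj' : j ≤ m := by
      have := Finset.mem_range.mp hj; omega
    rw [Nat.sub_sub_self hj', hwsym j hj', map_mul, hεc]
    ring
  have e2 : ((4 * N : ℝ) : ℂ) = T + ε * (ε * T) := by
    rw [e1, ← e3, hTdef]
    rw [Finset.mul_sum, ← Finset.sum_add_distrib]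
    refine Finset.sum_congr rfl fun j _ => ?_
    simp only [hwdef]
    ring
  have hT : T = 2 * (N : ℂ) := by
    push_cast at e2
    linear_combination (-1 / 2 : ℂ) * e2 - (1 / 2 : ℂ) * T * hε2
  refine ⟨hNpos, ?_, ?_, ?_, ?_⟩
  · intro j hj
    rw [ha (m - j) (Nat.sub_le m j), ha j hj, Nat.sub_sub_self hj]
    have hkey : (starRingEnd ℂ lam) ^ (m - j) + ε * (starRingEnd ℂ lam) ^ j
        = ε * ((starRingEnd ℂ lam) ^ j + ε * (starRingEnd ℂ lam) ^ (m - j)) := by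
      linear_combination (- (starRingEnd ℂ lam) ^ (m - j)) * hε2
    rw [hkey]
    ring
  · have hsum3 : ∑ j ∈ Finset.range (m + 1), a j * lam ^ j = T * (c / (2 * (N : ℂ))) := by
      rw [hTdef, Finset.sum_mul]
      refine Finset.sum_congr rfl fun j hj => ?_
      have hj' : j ≤ m := by have := Finset.mem_range.mp hj; omega
      rw [ha j hj', hconjw j]
      ring
    rw [hsum3, hT]
    field_simp
  · have h2Nnorm : ‖(2 * (N : ℂ))‖ = 2 * N := by
      rw [show (2 * (N : ℂ)) = ((2 * N : ℝ) : ℂ) by push_cast; ring]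
      rw [Complex.norm_real]
      exact abs_of_pos (by linarith)
    have hsum4 : ∑ j ∈ Finset.range (m + 1), ‖a j‖ ^ 2
        = ∑ j ∈ Finset.range (m + 1), ‖w j‖ ^ 2 * (‖c‖ ^ 2 / (2 * N) ^ 2) := by
      refine Finset.sum_congr rfl fun j hj => ?_
      have hj' : j ≤ m := by have := Finset.mem_range.mp hj; omega
      rw [ha j hj', hconjw j, norm_div, norm_mul, RCLike.norm_conj, h2Nnorm]
      rw [div_pow, mul_pow]
      ring
    rw [hsum4, ← Finset.sum_mul, ← h4N]
    field_simp
    ring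
  · intro b hbsym hbsum
    have hc2 : 2 * c = ∑ j ∈ Finset.range (m + 1), b j * w j := by
      have r1 : ∑ j ∈ Finset.range (m + 1), b j * lam ^ j
          = ∑ j ∈ Finset.range (m + 1), ε * (b j * lam ^ (m - j)) := by
        rw [← hreflect (fun j => b j * lam ^ j)]
        refine Finset.sum_congr rfl fun j hj => ?_
        have hj' : j ≤ m := by have := Finset.mem_range.mp hj; omega
        rw [hbsym j hj']
        ring
      have hmain : 2 * c = (∑ j ∈ Finset.range (m + 1), b j * lam ^ j)
          + ∑ j ∈ Finset.range (m + 1), ε * (b j * lam ^ (m - j)) := by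
        rw [← r1, hbsum]
        ring
      rw [hmain, ← Finset.sum_add_distrib]
      refine Finset.sum_congr rfl fun j _ => ?_
      simp only [hwdef]
      ring
    have hcs : ‖2 * c‖ ^ 2 ≤ (∑ j ∈ Finset.range (m + 1), ‖b j‖ ^ 2)
        * ∑ j ∈ Finset.range (m + 1), ‖w j‖ ^ 2 := by
      calc ‖2 * c‖ ^ 2 = ‖∑ j ∈ Finset.range (m + 1), b j * w j‖ ^ 2 := by rw [hc2]
        _ ≤ (∑ j ∈ Finset.range (m + 1), ‖b j * w j‖) ^ 2 :=
            pow_le_pow_left₀ (norm_nonneg _) (norm_sum_le _ _) 2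
        _ = (∑ j ∈ Finset.range (m + 1), ‖b j‖ * ‖w j‖) ^ 2 := by simp [norm_mul]
        _ ≤ _ := Finset.sum_mul_sq_le_sq_mul_sq _ _ _
    have h2c : ‖2 * c‖ ^ 2 = 4 * ‖c‖ ^ 2 := by
      rw [norm_mul]
      norm_num
      ring
    rw [div_le_iff₀ hNpos]
    nlinarith [Finset.sum_nonneg (fun j (_ : j ∈ Finset.range (m + 1)) => sq_nonneg ‖b j‖), hcs, h2c, h4N]
end
end
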